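/- arXiv:2512.13341 — 2 statements merged into one kernel-verified Lean document; each statement's English description precedes it below -/
import Mathlib

section
/- Every Floyd–Auslander system (X,T) is topologically conjugate to a Floyd–Auslander system (X̃,T̃) (over a possibly different odometer, with data (p̃_n) and (λ̃_j^n)) satisfying 1 ≤ |Q̃(n)| < p̃_n for all n ∈ ℕ, where Q̃(n) = {j ∈ [p̃_n] : λ̃_j^n = λ₁}; that is, there is a homeomorphism h : X̃ → X with h ∘ T̃ = T ∘ h. -/
open Filter Topology

noncomputable section

def lam0 : ℝ → ℝ := fun x => x / 2
def lam1 : ℝ → ℝ := fun x => x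
def lam2 : ℝ → ℝ := fun x => x / 2 + 1 / 2

/-- The defining data of a Floyd–Auslander construction: a sequence `p` of
integers `≥ 2` and, for each `n` and `j ∈ [p n]`, a map `lam n j` which is one
of `lam0, lam1, lam2`. -/
structure FAData where
  p : ℕ → ℕ
  hp : ∀ n, 2 ≤ p n
  lam : (n : ℕ) → Fin (p n) → ℝ → ℝ
  hlam : ∀ n j, lam n j = lam0 ∨ lam n j = lam1 ∨ lam n j = lam2

namespace FAData

variable (D : FAData)

abbrev Sigma : Type := ∀ n, Fin (D.p n)

def fin0 (n : ℕ) : Fin (D.p n) := ⟨0, by have := D.hp n; omega⟩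

def finTop (n : ℕ) : Fin (D.p n) := ⟨D.p n - 1, by have := D.hp n; omega⟩

/-- Addition mod `p n`, as an element of `Fin (p n)`. -/
def modAdd (n : ℕ) (a b : ℕ) : Fin (D.p n) :=
  ⟨(a + b) % D.p n, Nat.mod_lt _ (by have := D.hp n; omega)⟩

def Q (n : ℕ) : Set (Fin (D.p n)) := {j | D.lam n j = lam1}
def H0 (n : ℕ) : Set (Fin (D.p n)) := {j | D.lam n j = lam0}
def H2 (n : ℕ) : Set (Fin (D.p n)) := {j | D.lam n j = lam2}

/-- The carry entering position `n` when adding `1̲ = 10^∞` to `α`. -/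
def carryIn (α : D.Sigma) : ℕ → ℕ
  | 0 => 1
  | n + 1 => if D.p n ≤ (α n).val + carryIn α n then 1 else 0

/-- The odometer add-one map `α ↦ α + 1̲`. -/
def addOne (α : D.Sigma) : D.Sigma := fun n => D.modAdd n (α n).val (D.carryIn α n)

/-- `lamComp α n = λ¹_{α₁} ∘ … ∘ λⁿ_{α_n}` (with `lamComp α 0 = id`). -/
def lamComp (α : D.Sigma) : ℕ → ℝ → ℝ
  | 0 => id
  | n + 1 => lamComp α n ∘ D.lam n (α n)

/-- The space `X ⊆ Σ × ℝ` of the Floyd–Auslander construction. -/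
def X : Set (D.Sigma × ℝ) :=
  {q | ∃ z ∈ Set.Icc (0 : ℝ) 1, Tendsto (fun n => D.lamComp q.1 n z) atTop (𝓝 q.2)}

/-- The fibre `L_α = ({α} × [0,1]) ∩ X`. -/
def Lfib (α : D.Sigma) : Set (D.Sigma × ℝ) := {q ∈ D.X | q.1 = α}

/-- A fibre `L_α` is maximal if the length (diameter) of `π₂(L_α)` is maximal. -/
def IsMaximalFiber (α : D.Sigma) : Prop :=
  ∀ β : D.Sigma, Metric.diam (Prod.snd '' D.Lfib β) ≤ Metric.diam (Prod.snd '' D.Lfib α)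

/-- A convenient subset `𝒜 ⊆ Σ`. -/
def Convenient (𝒜 : Set D.Sigma) : Prop :=
  ¬𝒜.Countable ∧ (∀ α ∈ 𝒜, D.IsMaximalFiber α) ∧
    ∃ q k k' : ℕ → ℕ, StrictMono q ∧ StrictMono k ∧ StrictMono k' ∧
      (∀ ℓ, ∃ ξ1 ξ2 : Fin (D.p (q ℓ)), ξ1 ∈ D.Q (q ℓ) ∧ ξ2 ∈ D.Q (q ℓ) ∧ ξ1 < ξ2 ∧
        ∀ α ∈ 𝒜, α (q ℓ) = ξ1) ∧
      (∀ ℓ, (D.H2 (k ℓ)).Nonempty ∧ ∃ ζ ∈ D.Q (k ℓ), ∀ α ∈ 𝒜, α (k ℓ) = ζ) ∧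
      (∀ ℓ, (D.H0 (k' ℓ)).Nonempty ∧ ∃ ζ ∈ D.Q (k' ℓ), ∀ α ∈ 𝒜, α (k' ℓ) = ζ)

/-- Condition (A). -/
def CondA : Prop :=
  ∃ ns : ℕ → ℕ, StrictMono ns ∧ ∀ ℓ, 2 ≤ (D.Q (ns ℓ)).ncard ∧
    ∃ a0 a1 : Fin (D.p (ns ℓ)), a0 ∈ D.Q (ns ℓ) ∧ a1 ∈ D.Q (ns ℓ) ∧ a0 ≠ a1 ∧
      ∃ Δ : Fin (D.p (ns ℓ)),
        D.modAdd (ns ℓ) a0.val Δ.val ∈ D.H0 (ns ℓ) ∧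
        D.modAdd (ns ℓ) a1.val Δ.val ∈ D.H2 (ns ℓ)

/-- Condition (B). -/
def CondB : Prop :=
  ∃ ns : ℕ → ℕ, StrictMono ns ∧ ∀ ℓ, 2 ≤ (D.Q (ns ℓ)).ncard ∧
    ∀ a0 a1 : Fin (D.p (ns ℓ)), a0 ∈ D.Q (ns ℓ) → a1 ∈ D.Q (ns ℓ) → a0 ≠ a1 →
      ∀ j : Fin (D.p (ns ℓ)),
        (D.modAdd (ns ℓ) a0.val j.val ∈ D.H0 (ns ℓ) ↔
          D.modAdd (ns ℓ) a1.val j.val ∈ D.H0 (ns ℓ)) ∧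
        (D.modAdd (ns ℓ) a0.val j.val ∈ D.H2 (ns ℓ) ↔
          D.modAdd (ns ℓ) a1.val j.val ∈ D.H2 (ns ℓ))

/-- Condition (C). -/
def CondC : Prop :=
  ∃ ns : ℕ → ℕ, StrictMono ns ∧ ∀ ℓ, 2 ≤ (D.Q (ns ℓ)).ncard ∧
    ∃ a0 a1 : Fin (D.p (ns ℓ)), a0 ∈ D.Q (ns ℓ) ∧ a1 ∈ D.Q (ns ℓ) ∧ a0 ≠ a1 ∧
      ∃ Δ : Fin (D.p (ns ℓ)), ∃ h : a0.val + Δ.val < D.p (ns ℓ),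
        (⟨a0.val + Δ.val, h⟩ : Fin (D.p (ns ℓ))) ∈ D.Q (ns ℓ) ∧
        D.modAdd (ns ℓ) a1.val Δ.val ∈ D.H0 (ns ℓ) ∪ D.H2 (ns ℓ)

end FAData

/-- A Floyd–Auslander system: the data of the construction together with the
skew-product map `T`, the continuity conditions (i) and the condition (ii) that
`Q n = ∅` for at most finitely many `n`. -/
structure FASystem extends FAData where
  T : toFAData.X → toFAData.X
  hT : ∀ (α : toFAData.Sigma) (z y y' : ℝ), z ∈ Set.Icc (0 : ℝ) 1 →
    Tendsto (fun n => toFAData.lamComp α n z) atTop (𝓝 y) →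
    Tendsto (fun n => toFAData.lamComp (toFAData.addOne α) n z) atTop (𝓝 y') →
    ∀ hq : (α, y) ∈ toFAData.X,
      (T ⟨(α, y), hq⟩ : toFAData.Sigma × ℝ) = (toFAData.addOne α, y')
  infLeft : {n : ℕ | toFAData.lam n (toFAData.fin0 n) = lam0 ∨
      toFAData.lam n (toFAData.fin0 n) = lam2}.Infinite
  infRight : {n : ℕ | toFAData.lam n (toFAData.finTop n) = lam0 ∨
      toFAData.lam n (toFAData.finTop n) = lam2}.Infinite
  Qfin : {n : ℕ | toFAData.Q n = ∅}.Finite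

namespace FASystem

variable (S : FASystem)

/-- The (forward) Ellis semigroup `E(X)`: the closure of `{Tⁿ : n ≥ 1}` in `X^X`. -/
def Ellis : Set (S.toFAData.X → S.toFAData.X) :=
  closure (Set.range fun n : ℕ => S.T^[n + 1])

/-- The set of idempotents `J(X)` of the Ellis semigroup. -/
def J : Set (S.toFAData.X → S.toFAData.X) := {f | f ∈ S.Ellis ∧ f ∘ f = f}

/-- The set of minimal idempotents `J^min(X)` (minimal for `e ≤ f ↔ e = e ∘ f`). -/
def Jmin : Set (S.toFAData.X → S.toFAData.X) :=
  {f | f ∈ S.J ∧ ∀ e ∈ S.J, e = e ∘ f → e = f}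

/-- `(X,T)` is minimal: every forward orbit is dense. -/
def Minimal : Prop := ∀ x : S.toFAData.X, Dense (Set.range fun n : ℕ => S.T^[n] x)

/-- Property (∗). -/
def PropertyStar : Prop :=
  ∃ a ∈ Set.Ioo (0 : ℝ) 1, ∃ 𝒜 : Set S.toFAData.Sigma, S.toFAData.Convenient 𝒜 ∧
    ((∀ B ⊆ 𝒜, ∃ f ∈ S.J, ∃ B1 B2 : Set S.toFAData.Sigma, B1 ∪ B2 = B ∧ Disjoint B1 B2 ∧
        (∀ α ∈ 𝒜 \ B, ∃ b ∈ Set.Icc (0 : ℝ) a, ∀ q : S.toFAData.X,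
          (q : S.toFAData.Sigma × ℝ).1 = α → (f q : S.toFAData.Sigma × ℝ) = (α, b)) ∧
        (∀ α ∈ B1, ∃ c : ℝ, a < c ∧ ∀ q : S.toFAData.X,
          (q : S.toFAData.Sigma × ℝ).1 = α → (f q : S.toFAData.Sigma × ℝ) = (α, c)) ∧
        (∀ α ∈ B2, ∀ q : S.toFAData.X, (q : S.toFAData.Sigma × ℝ).1 = α → f q = q)) ∨
     (∀ B ⊆ 𝒜, ∃ f ∈ S.J, ∃ B1 B2 : Set S.toFAData.Sigma, B1 ∪ B2 = B ∧ Disjoint B1 B2 ∧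
        (∀ α ∈ 𝒜 \ B, ∃ b ∈ Set.Icc a (1 : ℝ), ∀ q : S.toFAData.X,
          (q : S.toFAData.Sigma × ℝ).1 = α → (f q : S.toFAData.Sigma × ℝ) = (α, b)) ∧
        (∀ α ∈ B1, ∃ c : ℝ, c < a ∧ ∀ q : S.toFAData.X,
          (q : S.toFAData.Sigma × ℝ).1 = α → (f q : S.toFAData.Sigma × ℝ) = (α, c)) ∧
        (∀ α ∈ B2, ∀ q : S.toFAData.X, (q : S.toFAData.Sigma × ℝ).1 = α → f q = q)))

end FASystem

-- Stage 1 : affine analysis, to be inserted before the final theorem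
namespace FAAux
open FAData Set
open scoped Classical

variable (D : FAData)

lemma lam0_ne_lam1 : lam0 ≠ lam1 := by
  intro h
  have := congrFun h 1
  simp only [lam0, lam1] at this
  norm_num at this

lemma lam2_ne_lam1 : lam2 ≠ lam1 := by
  intro h
  have := congrFun h 0
  simp [lam0, lam1, lam2] at this

lemma lam0_ne_lam2 : lam0 ≠ lam2 := by
  intro h
  have := congrFun h 0
  simp only [lam0, lam2] at this
  norm_num at this

lemma lam1_ne_lam2 : lam1 ≠ lam2 := fun h => lam2_ne_lam1 h.symm

/-- slope of the map `lam n j` -/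
def slf (n : ℕ) (j : Fin (D.p n)) : ℝ := if D.lam n j = lam1 then 1 else 1/2

/-- constant term of the map `lam n j` -/
def off0 (n : ℕ) (j : Fin (D.p n)) : ℝ := if D.lam n j = lam2 then 1/2 else 0

lemma lam_apply (n : ℕ) (j : Fin (D.p n)) (z : ℝ) :
    D.lam n j z = slf D n j * z + off0 D n j := by
  rcases D.hlam n j with h | h | h <;>
    simp [slf, off0, h, lam0, lam1, lam2, lam0_ne_lam1, lam2_ne_lam1, lam0_ne_lam2, lam1_ne_lam2] <;> ring

lemma slf_pos (n : ℕ) (j : Fin (D.p n)) : 0 < slf D n j := by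
  unfold slf; split <;> norm_num

lemma slf_le_one (n : ℕ) (j : Fin (D.p n)) : slf D n j ≤ 1 := by
  unfold slf; split <;> norm_num

lemma off0_nonneg (n : ℕ) (j : Fin (D.p n)) : 0 ≤ off0 D n j := by
  unfold off0; split <;> norm_num

lemma slf_add_off0_le_one (n : ℕ) (j : Fin (D.p n)) : slf D n j + off0 D n j ≤ 1 := by
  unfold slf off0
  rcases D.hlam n j with h | h | h <;>
    simp [h, lam0_ne_lam1, lam2_ne_lam1, lam0_ne_lam2, lam1_ne_lam2] <;> norm_num

/-- slope of `lamComp α n` -/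
def sl (α : D.Sigma) (n : ℕ) : ℝ := ∏ m ∈ Finset.range n, slf D m (α m)

/-- constant term of `lamComp α n` -/
def ofc (α : D.Sigma) (n : ℕ) : ℝ := D.lamComp α n 0

lemma sl_succ (α : D.Sigma) (n : ℕ) :
    sl D α (n+1) = sl D α n * slf D n (α n) := Finset.prod_range_succ _ _

lemma sl_pos (α : D.Sigma) (n : ℕ) : 0 < sl D α n :=
  Finset.prod_pos fun m _ => slf_pos D m (α m)

lemma sl_le_one (α : D.Sigma) (n : ℕ) : sl D α n ≤ 1 :=
  Finset.prod_le_one (fun m _ => (slf_pos D m (α m)).le) (fun m _ => slf_le_one D m (α m))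

lemma lamComp_affine (α : D.Sigma) (n : ℕ) (z : ℝ) :
    D.lamComp α n z = sl D α n * z + ofc D α n := by
  induction n generalizing z with
  | zero => simp [FAData.lamComp, sl, ofc]
  | succ n ih =>
    have h1 : D.lamComp α (n+1) z = D.lamComp α n (D.lam n (α n) z) := rfl
    have h2 : ofc D α (n+1) = D.lamComp α n (D.lam n (α n) 0) := rfl
    rw [h1, ih, lam_apply, h2, ih, lam_apply, sl_succ]
    ring

lemma ofc_succ (α : D.Sigma) (n : ℕ) :
    ofc D α (n+1) = sl D α n * off0 D n (α n) + ofc D α n := by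
  unfold ofc
  have h2 : D.lamComp α (n+1) 0 = D.lamComp α n (D.lam n (α n) 0) := rfl
  rw [h2, lam_apply, lamComp_affine]
  unfold ofc
  ring

lemma sl_antitone (α : D.Sigma) : Antitone (sl D α) := by
  apply antitone_nat_of_succ_le
  intro n
  rw [sl_succ]
  calc sl D α n * slf D n (α n) ≤ sl D α n * 1 :=
        mul_le_mul_of_nonneg_left (slf_le_one D n (α n)) (sl_pos D α n).le
    _ = sl D α n := mul_one _

lemma ofc_monotone (α : D.Sigma) : Monotone (ofc D α) := by
  apply monotone_nat_of_le_succ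
  intro n
  rw [ofc_succ]
  nlinarith [sl_pos D α n, off0_nonneg D n (α n)]

lemma ofc_nonneg (α : D.Sigma) (n : ℕ) : 0 ≤ ofc D α n := by
  have := ofc_monotone D α (Nat.zero_le n)
  simpa [ofc, FAData.lamComp] using this

lemma upper_antitone (α : D.Sigma) : Antitone (fun n => ofc D α n + sl D α n) := by
  apply antitone_nat_of_succ_le
  intro n
  rw [ofc_succ, sl_succ]
  have h := slf_add_off0_le_one D n (α n)
  nlinarith [sl_pos D α n]

lemma upper_le_one (α : D.Sigma) (n : ℕ) : ofc D α n + sl D α n ≤ 1 := by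
  have := upper_antitone D α (Nat.zero_le n)
  simpa [ofc, FAData.lamComp, sl] using this

lemma ofc_le_one (α : D.Sigma) (n : ℕ) : ofc D α n ≤ 1 := by
  have := upper_le_one D α n
  have := sl_pos D α n
  linarith

/-- limit slope -/
def sL (α : D.Sigma) : ℝ := ⨅ n, sl D α n

/-- limit constant term -/
def tL (α : D.Sigma) : ℝ := ⨆ n, ofc D α n

lemma tendsto_sl (α : D.Sigma) : Tendsto (sl D α) atTop (𝓝 (sL D α)) :=
  tendsto_atTop_ciInf (sl_antitone D α) ⟨0, by rintro x ⟨n, rfl⟩; exact (sl_pos D α n).le⟩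

lemma tendsto_ofc (α : D.Sigma) : Tendsto (ofc D α) atTop (𝓝 (tL D α)) :=
  tendsto_atTop_ciSup (ofc_monotone D α) ⟨1, by rintro x ⟨n, rfl⟩; exact ofc_le_one D α n⟩

lemma sL_nonneg (α : D.Sigma) : 0 ≤ sL D α :=
  le_ciInf fun n => (sl_pos D α n).le

lemma tendsto_lamComp (α : D.Sigma) (z : ℝ) :
    Tendsto (fun n => D.lamComp α n z) atTop (𝓝 (sL D α * z + tL D α)) := by
  have : (fun n => D.lamComp α n z) = fun n => sl D α n * z + ofc D α n := by
    funext n; exact lamComp_affine D α n z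
  rw [this]
  exact ((tendsto_sl D α).mul_const z).add (tendsto_ofc D α)

lemma mem_X_iff (α : D.Sigma) (y : ℝ) :
    (α, y) ∈ D.X ↔ ∃ z ∈ Set.Icc (0:ℝ) 1, y = sL D α * z + tL D α := by
  constructor
  · rintro ⟨z, hz, hlim⟩
    exact ⟨z, hz, tendsto_nhds_unique hlim (tendsto_lamComp D α z)⟩
  · rintro ⟨z, hz, rfl⟩
    exact ⟨z, hz, tendsto_lamComp D α z⟩

/-! ### Odometer values and carries -/

def Pn (n : ℕ) : ℕ := ∏ m ∈ Finset.range n, D.p m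

def Vn (α : D.Sigma) (n : ℕ) : ℕ := ∑ m ∈ Finset.range n, (α m).val * Pn D m

lemma Pn_pos (n : ℕ) : 0 < Pn D n :=
  Finset.prod_pos fun m _ => by have := D.hp m; omega

lemma Pn_succ (n : ℕ) : Pn D (n+1) = Pn D n * D.p n := Finset.prod_range_succ _ _

lemma Vn_succ (α : D.Sigma) (n : ℕ) :
    Vn D α (n+1) = Vn D α n + (α n).val * Pn D n := Finset.sum_range_succ _ _

lemma Vn_lt (α : D.Sigma) (n : ℕ) : Vn D α n < Pn D n := by
  induction n with
  | zero => simp [Vn, Pn]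
  | succ n ih =>
    rw [Vn_succ, Pn_succ]
    have h1 : (α n).val + 1 ≤ D.p n := (α n).isLt
    calc Vn D α n + (α n).val * Pn D n + 1 ≤ Pn D n + (α n).val * Pn D n := by omega
      _ = ((α n).val + 1) * Pn D n := by ring
      _ ≤ D.p n * Pn D n := Nat.mul_le_mul_right _ h1
      _ = Pn D n * D.p n := Nat.mul_comm _ _

lemma carry_le_one (α : D.Sigma) (n : ℕ) : D.carryIn α n ≤ 1 := by
  cases n with
  | zero => simp [FAData.carryIn]
  | succ n => unfold FAData.carryIn; split <;> omega

lemma carry_spec (α : D.Sigma) (n : ℕ) :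
    ((D.addOne α) n).val + D.carryIn α (n+1) * D.p n = (α n).val + D.carryIn α n := by
  have ha : ((D.addOne α) n).val = ((α n).val + D.carryIn α n) % D.p n := rfl
  have hc : D.carryIn α (n+1) = if D.p n ≤ (α n).val + D.carryIn α n then 1 else 0 := rfl
  have hlt : (α n).val < D.p n := (α n).isLt
  have hc1 : D.carryIn α n ≤ 1 := carry_le_one D α n
  have hp2 : 2 ≤ D.p n := D.hp n
  rw [ha, hc]
  split
  · rename_i h
    rw [Nat.mod_eq_sub_mod h, Nat.mod_eq_of_lt (by omega : (α n).val + D.carryIn α n - D.p n < D.p n)]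
    omega
  · rename_i h
    rw [Nat.mod_eq_of_lt (by omega)]
    omega

lemma Vn_addOne (α : D.Sigma) (n : ℕ) :
    Vn D (D.addOne α) n + D.carryIn α n * Pn D n = Vn D α n + 1 := by
  induction n with
  | zero => simp [Vn, Pn, FAData.carryIn]
  | succ n ih =>
    rw [Vn_succ, Vn_succ, Pn_succ]
    have h := carry_spec D α n
    nlinarith [h, ih]

lemma Vn_addOne_mod (α : D.Sigma) (n : ℕ) :
    Vn D (D.addOne α) n = (Vn D α n + 1) % Pn D n := by
  have h := Vn_addOne D α n
  have h1 := Vn_lt D (D.addOne α) n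
  have h2 := carry_le_one D α n
  interval_cases h3 : D.carryIn α n
  · simp at h
    rw [← h, Nat.mod_eq_of_lt (by omega)]
  · rw [← h]
    simp [Nat.add_mul_mod_self_right]
    exact (Nat.mod_eq_of_lt h1).symm

lemma Vn_inj (α β : D.Sigma) (n : ℕ) (h : Vn D α n = Vn D β n) :
    ∀ m, m < n → α m = β m := by
  induction n with
  | zero => omega
  | succ n ih =>
    rw [Vn_succ, Vn_succ] at h
    have hα := Vn_lt D α n
    have hβ := Vn_lt D β n
    have e1 : (Vn D α n + (α n).val * Pn D n) / Pn D n = (α n).val := by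
      rw [Nat.add_mul_div_right _ _ (Pn_pos D n), Nat.div_eq_of_lt hα, Nat.zero_add]
    have e2 : (Vn D β n + (β n).val * Pn D n) / Pn D n = (β n).val := by
      rw [Nat.add_mul_div_right _ _ (Pn_pos D n), Nat.div_eq_of_lt hβ, Nat.zero_add]
    have hv : (α n).val = (β n).val := by rw [← e1, ← e2, h]
    have hV : Vn D α n = Vn D β n := by rw [hv] at h; omega
    intro m hm
    rcases Nat.lt_succ_iff_lt_or_eq.mp hm with hm' | rfl
    · exact ih hV m hm'
    · exact Fin.ext hv

/-! ### Carry propagation and zero-slope stability -/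

lemma carry_zero_succ (α : D.Sigma) (n : ℕ) (h : D.carryIn α n = 0) :
    D.carryIn α (n+1) = 0 := by
  have hdef : D.carryIn α (n+1) = if D.p n ≤ (α n).val + D.carryIn α n then 1 else 0 := rfl
  have hlt := (α n).isLt
  rw [hdef, h]
  simp [Nat.not_le.mpr (by omega : (α n).val + 0 < D.p n)]

lemma carry_zero_of_ge (α : D.Sigma) (n₀ : ℕ) (h : D.carryIn α n₀ = 0) :
    ∀ n, n₀ ≤ n → D.carryIn α n = 0 := by
  intro n hn
  induction n, hn using Nat.le_induction with
  | base => exact h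
  | succ n hn ih => exact carry_zero_succ D α n ih

lemma addOne_eq_of_carry_zero (α : D.Sigma) (n : ℕ) (h : D.carryIn α n = 0) :
    D.addOne α n = α n := by
  apply Fin.ext
  have : (D.addOne α n).val = ((α n).val + D.carryIn α n) % D.p n := rfl
  rw [this, h, Nat.add_zero, Nat.mod_eq_of_lt (α n).isLt]

lemma carry_one_or_zero (α : D.Sigma) (n : ℕ) : D.carryIn α n = 0 ∨ D.carryIn α n = 1 := by
  have := carry_le_one D α n
  omega

lemma top_of_all_carry_one (α : D.Sigma) (h : ∀ n, D.carryIn α n ≠ 0) (n : ℕ) :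
    (α n).val = D.p n - 1 := by
  have h1 : D.carryIn α (n+1) = 1 := (carry_one_or_zero D α (n+1)).resolve_left (h (n+1))
  have h0 : D.carryIn α n = 1 := (carry_one_or_zero D α n).resolve_left (h n)
  have hdef : D.carryIn α (n+1) = if D.p n ≤ (α n).val + D.carryIn α n then 1 else 0 := rfl
  rw [hdef, h0] at h1
  by_contra hne
  have hlt := (α n).isLt
  rw [if_neg (by omega)] at h1
  omega

lemma addOne_of_all_carry_one (α : D.Sigma) (h : ∀ n, D.carryIn α n ≠ 0) (n : ℕ) :
    D.addOne α n = D.fin0 n := by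
  apply Fin.ext
  have h0 : D.carryIn α n = 1 := (carry_one_or_zero D α n).resolve_left (h n)
  have : (D.addOne α n).val = ((α n).val + D.carryIn α n) % D.p n := rfl
  rw [this, h0, top_of_all_carry_one D α h n]
  have hp := D.hp n
  have : D.p n - 1 + 1 = D.p n := by omega
  rw [this, Nat.mod_self]
  rfl

/-- If infinitely many levels along `α` carry a genuine contraction, the limit
slope vanishes. -/
lemma sL_eq_zero_of_infinite (α : D.Sigma) (h : {m | slf D m (α m) ≠ 1}.Infinite) :
    sL D α = 0 := by
  have key : ∀ ε : ℝ, 0 < ε → sL D α < ε := by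
    intro ε hε
    obtain ⟨k, hk⟩ := exists_pow_lt_of_lt_one hε (by norm_num : (1:ℝ)/2 < 1)
    obtain ⟨t, hts, htc⟩ := h.exists_subset_card_eq k
    set n := (t.sup id) + 1 with hn
    have hsub : t ⊆ Finset.range n := by
      intro m hm
      refine Finset.mem_range.mpr ?_
      have := Finset.le_sup (f := id) hm
      simp only [id] at this
      omega
    have hval : ∀ m ∈ t, slf D m (α m) = 1/2 := by
      intro m hm
      have hne : slf D m (α m) ≠ 1 := hts hm
      by_cases hcase : D.lam m (α m) = lam1
      · exact absurd (by simp [slf, hcase]) hne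
      · simp [slf, hcase]
    have h1 : sl D α n = (∏ m ∈ Finset.range n \ t, slf D m (α m)) * ∏ m ∈ t, slf D m (α m) :=
      (Finset.prod_sdiff hsub).symm
    have h2 : (∏ m ∈ t, slf D m (α m)) = (1/2 : ℝ)^k := by
      rw [Finset.prod_congr rfl hval, Finset.prod_const, htc]
    have h3 : (∏ m ∈ Finset.range n \ t, slf D m (α m)) ≤ 1 :=
      Finset.prod_le_one (fun m _ => (slf_pos D m (α m)).le) (fun m _ => slf_le_one D m (α m))
    have h4 : (0:ℝ) ≤ ∏ m ∈ t, slf D m (α m) :=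
      Finset.prod_nonneg fun m _ => (slf_pos D m (α m)).le
    have h5 : sl D α n ≤ (1/2:ℝ)^k := by
      rw [h1]
      calc (∏ m ∈ Finset.range n \ t, slf D m (α m)) * ∏ m ∈ t, slf D m (α m)
          ≤ 1 * ∏ m ∈ t, slf D m (α m) := mul_le_mul_of_nonneg_right h3 h4
        _ = (1/2:ℝ)^k := by rw [one_mul, h2]
    have h6 : sL D α ≤ sl D α n := ciInf_le ⟨0, by rintro x ⟨m, rfl⟩; exact (sl_pos D α m).le⟩ n
    linarith
  by_contra hne
  have hpos : 0 < sL D α := lt_of_le_of_ne (sL_nonneg D α) (Ne.symm hne)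
  exact absurd (key _ hpos) (lt_irrefl _)

/-- infLeft-type hypothesis, as a property of the data. -/
def InfL : Prop := {n : ℕ | D.lam n (D.fin0 n) = lam0 ∨ D.lam n (D.fin0 n) = lam2}.Infinite

lemma sL_comparison (α β : D.Sigma) (n₀ : ℕ) (hagree : ∀ m, n₀ ≤ m → α m = β m)
    (h : sL D α = 0) : sL D β = 0 := by
  have key : ∀ n, n₀ ≤ n → sl D β n = (sl D β n₀ / sl D α n₀) * sl D α n := by
    intro n hn
    induction n, hn using Nat.le_induction with
    | base =>
      have hne := (sl_pos D α n₀).ne'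
      field_simp
    | succ n hn ih =>
      rw [sl_succ, sl_succ, ih, hagree n hn]
      ring
  have h1 : Tendsto (fun n => (sl D β n₀ / sl D α n₀) * sl D α n) atTop
      (𝓝 ((sl D β n₀ / sl D α n₀) * sL D α)) := (tendsto_sl D α).const_mul _
  rw [h, mul_zero] at h1
  have h2 : Tendsto (sl D β) atTop (𝓝 0) := by
    apply h1.congr'
    filter_upwards [eventually_ge_atTop n₀] with n hn
    exact (key n hn).symm
  exact tendsto_nhds_unique (tendsto_sl D β) h2

lemma zeroStable (hL : InfL D) (α : D.Sigma) (h : sL D α = 0) : sL D (D.addOne α) = 0 := by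
  by_cases hc : ∃ n, D.carryIn α n = 0
  · obtain ⟨n₀, hn₀⟩ := hc
    exact sL_comparison D α (D.addOne α) n₀
      (fun m hm => (addOne_eq_of_carry_zero D α m (carry_zero_of_ge D α n₀ hn₀ m hm)).symm) h
  · push_neg at hc
    apply sL_eq_zero_of_infinite
    apply Set.Infinite.mono _ hL
    intro n hn
    simp only [Set.mem_setOf_eq] at hn ⊢
    rw [addOne_of_all_carry_one D α hc n]
    unfold slf
    rcases hn with h' | h' <;> rw [h']
    · rw [if_neg lam0_ne_lam1]; norm_num
    · rw [if_neg lam2_ne_lam1]; norm_num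

/-! ### The canonical map `T` on `X` -/

def Tfun : D.X → D.X := fun q =>
  let spec := (mem_X_iff D q.1.1 q.1.2).mp (by exact (Prod.mk.eta (p := q.1)) ▸ q.2)
  let z := Classical.choose spec
  ⟨(D.addOne q.1.1, sL D (D.addOne q.1.1) * z + tL D (D.addOne q.1.1)),
    (mem_X_iff D _ _).mpr ⟨z, (Classical.choose_spec spec).1, rfl⟩⟩

lemma Tfun_fst (q : D.X) : (Tfun D q : D.Sigma × ℝ).1 = D.addOne q.1.1 := rfl

lemma Tfun_spec (hL : InfL D) (q : D.X) (z : ℝ) (hz : z ∈ Set.Icc (0:ℝ) 1)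
    (hy : (q : D.Sigma × ℝ).2 = sL D q.1.1 * z + tL D q.1.1) :
    (Tfun D q : D.Sigma × ℝ) =
      (D.addOne q.1.1, sL D (D.addOne q.1.1) * z + tL D (D.addOne q.1.1)) := by
  unfold Tfun
  simp only
  set spec := (mem_X_iff D q.1.1 q.1.2).mp (by exact (Prod.mk.eta (p := q.1)) ▸ q.2) with hspec
  obtain ⟨hz₀, hy₀⟩ := Classical.choose_spec spec
  set z₀ := Classical.choose spec
  refine Prod.ext rfl ?_
  simp only
  rcases eq_or_ne (sL D q.1.1) 0 with h0 | h0
  · have h0' : sL D (D.addOne q.1.1) = 0 := zeroStable D hL q.1.1 h0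
    rw [h0', zero_mul, zero_mul]
  · have : z₀ = z := by
      rw [hy₀] at hy
      have := mul_left_cancel₀ h0 (by linarith : sL D q.1.1 * z₀ = sL D q.1.1 * z)
      exact this
    rw [this]

/-- Package a data set satisfying the continuity conditions into a Floyd–Auslander
system with the canonical `T`. -/
def mkSys (hL : InfL D)
    (hR : {n : ℕ | D.lam n (D.finTop n) = lam0 ∨ D.lam n (D.finTop n) = lam2}.Infinite)
    (hQ : {n : ℕ | D.Q n = ∅}.Finite) : FASystem where
  toFAData := D
  T := Tfun D
  hT := by
    intro α z y y' hz hlim hlim' hq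
    have hy : y = sL D α * z + tL D α := tendsto_nhds_unique hlim (tendsto_lamComp D α z)
    have hy' : y' = sL D (D.addOne α) * z + tL D (D.addOne α) :=
      tendsto_nhds_unique hlim' (tendsto_lamComp D (D.addOne α) z)
    have := Tfun_spec D hL ⟨(α, y), hq⟩ z hz hy
    rw [this, hy']
  infLeft := hL
  infRight := hR
  Qfin := hQ

lemma mkSys_T_spec (hL : InfL D) (hR : _) (hQ : _) (q : D.X) (z : ℝ)
    (hz : z ∈ Set.Icc (0:ℝ) 1)
    (hy : (q : D.Sigma × ℝ).2 = sL D q.1.1 * z + tL D q.1.1) :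
    ((mkSys D hL hR hQ).T q).val =
      (D.addOne q.1.1, sL D (D.addOne q.1.1) * z + tL D (D.addOne q.1.1)) :=
  Tfun_spec D hL q z hz hy

/-! ### Continuity helpers -/

lemma ofc_eq_sum (α : D.Sigma) (n : ℕ) :
    ofc D α n = ∑ m ∈ Finset.range n, sl D α m * off0 D m (α m) := by
  induction n with
  | zero => simp [ofc, FAData.lamComp]
  | succ n ih => rw [ofc_succ, ih, Finset.sum_range_succ]; ring

lemma continuous_slf_coord (m : ℕ) : Continuous (fun α : D.Sigma => slf D m (α m)) :=
  (continuous_of_discreteTopology (f := fun j : Fin (D.p m) => slf D m j)).comp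
    (continuous_apply m)

lemma continuous_off0_coord (m : ℕ) : Continuous (fun α : D.Sigma => off0 D m (α m)) :=
  (continuous_of_discreteTopology (f := fun j : Fin (D.p m) => off0 D m j)).comp
    (continuous_apply m)

lemma continuous_sl_fixed (N : ℕ) : Continuous (fun α : D.Sigma => sl D α N) := by
  unfold sl
  exact continuous_finset_prod _ fun m _ => continuous_slf_coord D m

lemma continuous_ofc_fixed (N : ℕ) : Continuous (fun α : D.Sigma => ofc D α N) := by
  have : (fun α : D.Sigma => ofc D α N) =
      fun α => ∑ m ∈ Finset.range N, sl D α m * off0 D m (α m) := by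
    funext α; exact ofc_eq_sum D α N
  rw [this]
  exact continuous_finset_sum _ fun m _ =>
    (continuous_sl_fixed D m).mul (continuous_off0_coord D m)

/-! ### Step B : regrouping levels into blocks -/

section StepB

variable (D : FAData)

def NFpred (n : ℕ) : Prop := ∃ j, D.lam n j ≠ lam1

def qk (k : ℕ) : ℕ := Nat.nth (NFpred D) k

def Nk : ℕ → ℕ
  | 0 => 0
  | k + 1 => qk D k + 1

lemma qk_strictMono (hNF : {n | NFpred D n}.Infinite) : StrictMono (qk D) := Nat.nth_strictMono hNF

lemma qk_mem (hNF : {n | NFpred D n}.Infinite) (k : ℕ) : NFpred D (qk D k) := Nat.nth_mem_of_infinite hNF k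

lemma Nk_le_qk (hNF : {n | NFpred D n}.Infinite) (k : ℕ) : Nk D k ≤ qk D k := by
  cases k with
  | zero => exact Nat.zero_le _
  | succ k =>
    show qk D k + 1 ≤ qk D (k+1)
    exact Nat.succ_le_of_lt (qk_strictMono D hNF (Nat.lt_succ_self k))

lemma Nk_lt_succ (hNF : {n | NFpred D n}.Infinite) (k : ℕ) : Nk D k < Nk D (k+1) := by
  have := Nk_le_qk D hNF k
  show Nk D k < qk D k + 1
  omega

lemma Nk_strictMono (hNF : {n | NFpred D n}.Infinite) : StrictMono (Nk D) :=
  strictMono_nat_of_lt_succ (Nk_lt_succ D hNF)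

lemma Nk_ge (hNF : {n | NFpred D n}.Infinite) (k : ℕ) : k ≤ Nk D k := (Nk_strictMono D hNF).le_apply

lemma full_lemma (hNF : {n | NFpred D n}.Infinite) {k m : ℕ} (h1 : Nk D k ≤ m) (h2 : m < qk D k) (j : Fin (D.p m)) :
    D.lam m j = lam1 := by
  by_contra hne
  have hm : NFpred D m := ⟨j, hne⟩
  have hnth : Nat.nth (NFpred D) (Nat.count (NFpred D) m) = m := Nat.nth_count hm
  set i := Nat.count (NFpred D) m
  have hik : i < k := by
    have : Nat.nth (NFpred D) i < Nat.nth (NFpred D) k := by rw [hnth]; exact h2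
    exact (Nat.nth_strictMono hNF).lt_iff_lt.mp this
  cases k with
  | zero => omega
  | succ k' =>
    have : qk D k' < m := by
      have : Nk D (k'+1) = qk D k' + 1 := rfl
      omega
    have : k' < i := by
      have h' : Nat.nth (NFpred D) k' < Nat.nth (NFpred D) i := by rw [hnth]; exact this
      exact (Nat.nth_strictMono hNF).lt_iff_lt.mp h'
    omega

def Wk (k m : ℕ) : ℕ := ∏ l ∈ Finset.Ico (Nk D k) m, D.p l

def Pk (k : ℕ) : ℕ := Wk D k (Nk D (k+1))

lemma Wk_pos (k m : ℕ) : 0 < Wk D k m :=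
  Finset.prod_pos fun l _ => by have := D.hp l; omega

lemma Wk_base (k : ℕ) : Wk D k (Nk D k) = 1 := by
  unfold Wk; rw [Finset.Ico_self, Finset.prod_empty]

lemma Wk_succ {k m : ℕ} (h : Nk D k ≤ m) : Wk D k (m+1) = Wk D k m * D.p m :=
  Finset.prod_Ico_succ_top h _

lemma Wk_dvd {k m m' : ℕ} (h : m ≤ m') : Wk D k m ∣ Wk D k m' :=
  Finset.prod_dvd_prod_of_subset _ _ _ (Finset.Ico_subset_Ico le_rfl h)

lemma Pk_eq (hNF : {n | NFpred D n}.Infinite) (k : ℕ) : Pk D k = Wk D k (qk D k) * D.p (qk D k) := by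
  show Wk D k (qk D k + 1) = _
  exact Wk_succ D (Nk_le_qk D hNF k)

lemma Pk_ge_two (hNF : {n | NFpred D n}.Infinite) (k : ℕ) : 2 ≤ Pk D k := by
  rw [Pk_eq D hNF k]
  have h1 := Wk_pos D k (qk D k)
  have h2 := D.hp (qk D k)
  nlinarith

lemma sum_digits_lt (k : ℕ) (d : ℕ → ℕ) (hd : ∀ m, d m < D.p m) :
    ∀ b, Nk D k ≤ b → (∑ m ∈ Finset.Ico (Nk D k) b, d m * Wk D k m) < Wk D k b := by
  intro b hb
  induction b, hb using Nat.le_induction with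
  | base => rw [Finset.Ico_self, Finset.sum_empty, Wk_base]; omega
  | succ b hb ih =>
    rw [Finset.sum_Ico_succ_top hb, Wk_succ D hb]
    have h1 := hd b
    have h2 := Wk_pos D k b
    nlinarith

lemma sum_digits_eq (k : ℕ) :
    ∀ b, Nk D k ≤ b → ∀ v, v < Wk D k b →
      (∑ m ∈ Finset.Ico (Nk D k) b, (v / Wk D k m % D.p m) * Wk D k m) = v := by
  intro b hb
  induction b, hb using Nat.le_induction with
  | base =>
    intro v hv
    rw [Wk_base] at hv
    rw [Finset.Ico_self, Finset.sum_empty]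
    omega
  | succ b hb ih =>
    intro v hv
    rw [Finset.sum_Ico_succ_top hb]
    set v' := v % Wk D k b with hv'def
    have hv' : v' < Wk D k b := Nat.mod_lt _ (Wk_pos D k b)
    have hsplit : v = Wk D k b * (v / Wk D k b) + v' := (Nat.div_add_mod v _).symm
    have hcong : ∀ m ∈ Finset.Ico (Nk D k) b,
        (v / Wk D k m % D.p m) * Wk D k m = (v' / Wk D k m % D.p m) * Wk D k m := by
      intro m hm
      rw [Finset.mem_Ico] at hm
      obtain ⟨c, hc⟩ := Wk_dvd D (le_of_lt hm.2) (k := k) (m := m)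
      have hpm : D.p m ∣ c := by
        have : c = ∏ l ∈ Finset.Ico m b, D.p l := by
          have h1 : Wk D k m * (∏ l ∈ Finset.Ico m b, D.p l) = Wk D k b := by
            unfold Wk
            exact Finset.prod_Ico_consecutive _ hm.1 (le_of_lt hm.2)
          have h2 := Wk_pos D k m
          rw [hc] at h1
          exact (Nat.eq_of_mul_eq_mul_left h2 h1).symm
        rw [this]
        exact Finset.dvd_prod_of_mem _ (Finset.mem_Ico.mpr ⟨le_rfl, hm.2⟩)
      obtain ⟨t, ht⟩ := hpm
      have hWm := Wk_pos D k m
      have : v / Wk D k m = v' / Wk D k m + D.p m * (t * (v / Wk D k b)) := by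
        calc v / Wk D k m = (Wk D k b * (v / Wk D k b) + v') / Wk D k m := by rw [← hsplit]
          _ = (Wk D k m * (c * (v / Wk D k b)) + v') / Wk D k m := by rw [hc]; ring_nf
          _ = c * (v / Wk D k b) + v' / Wk D k m := by
              rw [Nat.mul_add_div hWm]
          _ = v' / Wk D k m + D.p m * (t * (v / Wk D k b)) := by rw [ht]; ring
      rw [this, Nat.add_mul_mod_self_left]
    rw [Finset.sum_congr rfl hcong, ih v' hv']
    have htop : v / Wk D k b < D.p b := by
      rw [Nat.div_lt_iff_lt_mul (Wk_pos D k b)]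
      rw [Wk_succ D hb] at hv
      calc v < Wk D k b * D.p b := hv
        _ = D.p b * Wk D k b := Nat.mul_comm _ _
    rw [Nat.mod_eq_of_lt htop]
    have hsplit2 : v' + v / Wk D k b * Wk D k b = v := by
      rw [hv'def, Nat.mul_comm]
      exact Nat.mod_add_div v _
    omega

lemma dig_sum (k : ℕ) (d : ℕ → ℕ) (hd : ∀ m, d m < D.p m) {b m₀ : ℕ}
    (hb : Nk D k ≤ b) (h1 : Nk D k ≤ m₀) (h2 : m₀ < b) :
    (∑ m ∈ Finset.Ico (Nk D k) b, d m * Wk D k m) / Wk D k m₀ % D.p m₀ = d m₀ := by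
  set v := ∑ m ∈ Finset.Ico (Nk D k) b, d m * Wk D k m with hvdef
  rw [← Nat.mod_mul_right_div_self, ← Wk_succ D h1]
  have hsplit : (∑ m ∈ Finset.Ico (Nk D k) (m₀+1), d m * Wk D k m) +
      (∑ m ∈ Finset.Ico (m₀+1) b, d m * Wk D k m) = v :=
    Finset.sum_Ico_consecutive _ (by omega) (by omega)
  set low := ∑ m ∈ Finset.Ico (Nk D k) (m₀+1), d m * Wk D k m with hlowdef
  have hdvd : Wk D k (m₀+1) ∣ ∑ m ∈ Finset.Ico (m₀+1) b, d m * Wk D k m :=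
    Finset.dvd_sum fun m hm =>
      Dvd.dvd.mul_left (Wk_dvd D (Finset.mem_Ico.mp hm).1) _
  obtain ⟨c, hc⟩ := hdvd
  have hmod : v % Wk D k (m₀+1) = low := by
    rw [← hsplit, hc, Nat.add_mul_mod_self_left]
    exact Nat.mod_eq_of_lt (sum_digits_lt D k d hd (m₀+1) (by omega))
  rw [hmod, hlowdef, Finset.sum_Ico_succ_top h1]
  have hsmall : (∑ m ∈ Finset.Ico (Nk D k) m₀, d m * Wk D k m) < Wk D k m₀ :=
    sum_digits_lt D k d hd m₀ h1
  rw [Nat.add_mul_div_right _ _ (Wk_pos D k m₀), Nat.div_eq_of_lt hsmall, Nat.zero_add]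

def D2 (hNF : {n | NFpred D n}.Infinite) : FAData where
  p := Pk D
  hp := Pk_ge_two D hNF
  lam := fun k J => D.lam (qk D k)
    ⟨J.val / Wk D k (qk D k) % D.p (qk D k),
      Nat.mod_lt _ (by have := D.hp (qk D k); omega)⟩
  hlam := fun k J => D.hlam _ _

def blk (m : ℕ) : ℕ := Nat.findGreatest (fun k => Nk D k ≤ m) m

lemma blk_spec1 (m : ℕ) : Nk D (blk D m) ≤ m :=
  Nat.findGreatest_spec (P := fun k => Nk D k ≤ m) (Nat.zero_le m)
    (show Nk D 0 ≤ m from Nat.zero_le m)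

lemma blk_spec2 (hNF : {n | NFpred D n}.Infinite) (m : ℕ) : m < Nk D (blk D m + 1) := by
  by_contra h
  push_neg at h
  have hle : blk D m + 1 ≤ m := le_trans (Nk_ge D hNF _) h
  have h2 : blk D m + 1 ≤ blk D m :=
    Nat.le_findGreatest (P := fun k => Nk D k ≤ m) hle h
  omega

lemma blk_eq (hNF : {n | NFpred D n}.Infinite) {k m : ℕ}
    (h1 : Nk D k ≤ m) (h2 : m < Nk D (k+1)) : blk D m = k := by
  have b1 := blk_spec1 D m
  have b2 := blk_spec2 D hNF m
  rcases lt_trichotomy (blk D m) k with h | h | h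
  · have : Nk D (blk D m + 1) ≤ Nk D k := (Nk_strictMono D hNF).monotone (by omega)
    omega
  · exact h
  · have : Nk D (k+1) ≤ Nk D (blk D m) := (Nk_strictMono D hNF).monotone (by omega)
    omega

def ug (hNF : {n | NFpred D n}.Infinite) (β : (D2 D hNF).Sigma) : D.Sigma := fun m =>
  ⟨(β (blk D m)).val / Wk D (blk D m) m % D.p m,
    Nat.mod_lt _ (by have := D.hp m; omega)⟩

lemma ug_apply (hNF : {n | NFpred D n}.Infinite) (β : (D2 D hNF).Sigma) {k m : ℕ}
    (h1 : Nk D k ≤ m) (h2 : m < Nk D (k+1)) :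
    (ug D hNF β m).val = (β k).val / Wk D k m % D.p m := by
  show (β (blk D m)).val / Wk D (blk D m) m % D.p m = _
  rw [blk_eq D hNF h1 h2]

def gr (hNF : {n | NFpred D n}.Infinite) (α : D.Sigma) : (D2 D hNF).Sigma := fun k =>
  ⟨∑ m ∈ Finset.Ico (Nk D k) (Nk D (k+1)), (α m).val * Wk D k m,
    sum_digits_lt D k _ (fun m => (α m).isLt) _ (le_of_lt (Nk_lt_succ D hNF k))⟩

lemma ug_gr (hNF : {n | NFpred D n}.Infinite) (α : D.Sigma) : ug D hNF (gr D hNF α) = α := by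
  funext m
  apply Fin.ext
  have h1 := blk_spec1 D m
  have h2 := blk_spec2 D hNF m
  rw [ug_apply D hNF _ h1 h2]
  exact dig_sum D (blk D m) _ (fun m' => (α m').isLt)
    (le_of_lt (Nk_lt_succ D hNF _)) h1 h2

lemma sum_ug (hNF : {n | NFpred D n}.Infinite) (β : (D2 D hNF).Sigma) (k : ℕ) :
    (∑ m ∈ Finset.Ico (Nk D k) (Nk D (k+1)), (ug D hNF β m).val * Wk D k m) = (β k).val := by
  have hcong : ∀ m ∈ Finset.Ico (Nk D k) (Nk D (k+1)),
      (ug D hNF β m).val * Wk D k m = ((β k).val / Wk D k m % D.p m) * Wk D k m := by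
    intro m hm
    rw [Finset.mem_Ico] at hm
    rw [ug_apply D hNF β hm.1 hm.2]
  rw [Finset.sum_congr rfl hcong]
  exact sum_digits_eq D k _ (le_of_lt (Nk_lt_succ D hNF k)) _ (β k).isLt

lemma gr_ug (hNF : {n | NFpred D n}.Infinite) (β : (D2 D hNF).Sigma) :
    gr D hNF (ug D hNF β) = β := by
  funext k
  apply Fin.ext
  exact sum_ug D hNF β k

lemma Pn_bridge (hNF : {n | NFpred D n}.Infinite) :
    ∀ k, Pn (D2 D hNF) k = Pn D (Nk D k)
  | 0 => by simp [Pn, Nk]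
  | k+1 => by
    rw [Pn_succ, Pn_bridge hNF k]
    show Pn D (Nk D k) * Pk D k = Pn D (Nk D (k+1))
    unfold Pn Pk Wk
    simp only [Finset.range_eq_Ico]
    exact Finset.prod_Ico_consecutive _ (Nat.zero_le _) (le_of_lt (Nk_lt_succ D hNF k))

lemma Vn_bridge (hNF : {n | NFpred D n}.Infinite) (β : (D2 D hNF).Sigma) :
    ∀ k, Vn (D2 D hNF) β k = Vn D (ug D hNF β) (Nk D k)
  | 0 => by simp [Vn, Nk]
  | k+1 => by
    rw [Vn_succ, Vn_bridge hNF β k]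
    have hsum : Vn D (ug D hNF β) (Nk D (k+1)) = Vn D (ug D hNF β) (Nk D k) +
        ∑ m ∈ Finset.Ico (Nk D k) (Nk D (k+1)), (ug D hNF β m).val * Pn D m := by
      unfold Vn
      simp only [Finset.range_eq_Ico]
      exact (Finset.sum_Ico_consecutive _ (Nat.zero_le _)
        (le_of_lt (Nk_lt_succ D hNF k))).symm
    rw [hsum]
    congr 1
    have hPnm : ∀ m ∈ Finset.Ico (Nk D k) (Nk D (k+1)),
        (ug D hNF β m).val * Pn D m = Pn D (Nk D k) * ((ug D hNF β m).val * Wk D k m) := by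
      intro m hm
      rw [Finset.mem_Ico] at hm
      have : Pn D m = Pn D (Nk D k) * Wk D k m := by
        unfold Pn Wk
        simp only [Finset.range_eq_Ico]
        exact (Finset.prod_Ico_consecutive _ (Nat.zero_le _) hm.1).symm
      rw [this]
      ring
    rw [Finset.sum_congr rfl hPnm, ← Finset.mul_sum, sum_ug D hNF β k, Pn_bridge D hNF k]
    ring

lemma ug_addOne (hNF : {n | NFpred D n}.Infinite) (β : (D2 D hNF).Sigma) :
    ug D hNF ((D2 D hNF).addOne β) = D.addOne (ug D hNF β) := by
  funext n
  have hkey : ∀ k, Vn D (ug D hNF ((D2 D hNF).addOne β)) (Nk D k) =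
      Vn D (D.addOne (ug D hNF β)) (Nk D k) := by
    intro k
    rw [← Vn_bridge D hNF _ k, Vn_addOne_mod, Vn_bridge D hNF β k, Pn_bridge D hNF k,
      ← Vn_addOne_mod]
  exact Vn_inj D _ _ (Nk D (n+1)) (hkey (n+1)) n
    (lt_of_lt_of_le (Nat.lt_succ_self n) (Nk_ge D hNF (n+1)))

lemma lamComp_flat (hNF : {n | NFpred D n}.Infinite) (γ : D.Sigma) (k : ℕ) :
    ∀ j, Nk D k ≤ j → j ≤ qk D k → D.lamComp γ j = D.lamComp γ (Nk D k) := by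
  intro j hj
  induction j, hj using Nat.le_induction with
  | base => intro _; rfl
  | succ j hj ih =>
    intro hj1
    have hfull := full_lemma D hNF hj (by omega) (γ j)
    have hstep : D.lamComp γ (j+1) = D.lamComp γ j ∘ D.lam j (γ j) := rfl
    rw [hstep, hfull, ih (by omega)]
    rfl

lemma lamComp_bridge (hNF : {n | NFpred D n}.Infinite) (β : (D2 D hNF).Sigma) :
    ∀ k, (D2 D hNF).lamComp β k = D.lamComp (ug D hNF β) (Nk D k)
  | 0 => rfl
  | k+1 => by
    have h1 : (D2 D hNF).lamComp β (k+1) =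
        (D2 D hNF).lamComp β k ∘ (D2 D hNF).lam k (β k) := rfl
    have h2 : D.lamComp (ug D hNF β) (Nk D (k+1)) =
        D.lamComp (ug D hNF β) (qk D k) ∘ D.lam (qk D k) (ug D hNF β (qk D k)) := rfl
    rw [h1, h2, lamComp_bridge hNF β k,
      lamComp_flat D hNF (ug D hNF β) k (qk D k) (Nk_le_qk D hNF k) le_rfl]
    have hdig : (ug D hNF β (qk D k)).val = (β k).val / Wk D k (qk D k) % D.p (qk D k) :=
      ug_apply D hNF β (Nk_le_qk D hNF k)
        (show qk D k < Nk D (k+1) from Nat.lt_succ_self _)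
    suffices hlam : (D2 D hNF).lam k (β k) = D.lam (qk D k) (ug D hNF β (qk D k)) by
      rw [hlam]
    show D.lam (qk D k) ⟨(β k).val / Wk D k (qk D k) % D.p (qk D k), _⟩
      = D.lam (qk D k) (ug D hNF β (qk D k))
    exact congrArg (D.lam (qk D k)) (Fin.ext (by rw [hdig]))

lemma sl_bridge (hNF : {n | NFpred D n}.Infinite) (β : (D2 D hNF).Sigma) (k : ℕ) :
    sl (D2 D hNF) β k = sl D (ug D hNF β) (Nk D k) := by
  have h0 := congrFun (lamComp_bridge D hNF β k) 0
  have h1 := congrFun (lamComp_bridge D hNF β k) 1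
  rw [lamComp_affine, lamComp_affine] at h0 h1
  linarith

lemma ofc_bridge (hNF : {n | NFpred D n}.Infinite) (β : (D2 D hNF).Sigma) (k : ℕ) :
    ofc (D2 D hNF) β k = ofc D (ug D hNF β) (Nk D k) := by
  have h0 := congrFun (lamComp_bridge D hNF β k) 0
  rw [lamComp_affine, lamComp_affine] at h0
  linarith

lemma sL_bridge (hNF : {n | NFpred D n}.Infinite) (β : (D2 D hNF).Sigma) :
    sL (D2 D hNF) β = sL D (ug D hNF β) := by
  apply tendsto_nhds_unique (tendsto_sl (D2 D hNF) β)
  have h2 : Tendsto (fun k => sl D (ug D hNF β) (Nk D k)) atTop (𝓝 (sL D (ug D hNF β))) :=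
    (tendsto_sl D (ug D hNF β)).comp (Nk_strictMono D hNF).tendsto_atTop
  exact h2.congr (fun k => (sl_bridge D hNF β k).symm)

lemma tL_bridge (hNF : {n | NFpred D n}.Infinite) (β : (D2 D hNF).Sigma) :
    tL (D2 D hNF) β = tL D (ug D hNF β) := by
  apply tendsto_nhds_unique (tendsto_ofc (D2 D hNF) β)
  have h2 : Tendsto (fun k => ofc D (ug D hNF β) (Nk D k)) atTop (𝓝 (tL D (ug D hNF β))) :=
    (tendsto_ofc D (ug D hNF β)).comp (Nk_strictMono D hNF).tendsto_atTop
  exact h2.congr (fun k => (ofc_bridge D hNF β k).symm)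

/-! ### Compactness of `X` -/

lemma tL_bddAbove (α : D.Sigma) : BddAbove (Set.range (ofc D α)) :=
  ⟨1, by rintro x ⟨n, rfl⟩; exact ofc_le_one D α n⟩

lemma tL_nonneg (α : D.Sigma) : 0 ≤ tL D α := by
  have h0 : ofc D α 0 = 0 := by simp [ofc, FAData.lamComp]
  have := le_ciSup (tL_bddAbove D α) 0
  rw [h0] at this
  exact this

lemma ofc_le_tL (α : D.Sigma) (n : ℕ) : ofc D α n ≤ tL D α :=
  le_ciSup (tL_bddAbove D α) n

lemma tendsto_upper (α : D.Sigma) :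
    Tendsto (fun n => ofc D α n + sl D α n) atTop (𝓝 (tL D α + sL D α)) :=
  (tendsto_ofc D α).add (tendsto_sl D α)

lemma tL_add_sL_le (α : D.Sigma) (n : ℕ) : tL D α + sL D α ≤ ofc D α n + sl D α n :=
  le_of_tendsto (tendsto_upper D α)
    (Filter.eventually_atTop.mpr ⟨n, fun m hm => upper_antitone D α hm⟩)

lemma tL_add_sL_le_one (α : D.Sigma) : tL D α + sL D α ≤ 1 := by
  have := tL_add_sL_le D α 0
  have h0 : ofc D α 0 = 0 := by simp [ofc, FAData.lamComp]
  have h1 : sl D α 0 = 1 := by simp [sl]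
  rw [h0, h1] at this
  linarith

lemma sL_le_sl (α : D.Sigma) (n : ℕ) : sL D α ≤ sl D α n :=
  ciInf_le ⟨0, by rintro x ⟨m, rfl⟩; exact (sl_pos D α m).le⟩ n

lemma X_eq_inter : D.X = ⋂ n, {q : D.Sigma × ℝ |
    ofc D q.1 n ≤ q.2 ∧ q.2 ≤ ofc D q.1 n + sl D q.1 n} := by
  ext ⟨α, y⟩
  simp only [Set.mem_iInter, Set.mem_setOf_eq]
  rw [show ((α, y) ∈ D.X) ↔ _ from mem_X_iff D α y]
  constructor
  · rintro ⟨z, hz, rfl⟩ n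
    have h1 := ofc_le_tL D α n
    have h2 := tL_add_sL_le D α n
    have hs := sL_nonneg D α
    have hsz : 0 ≤ sL D α * z := mul_nonneg hs hz.1
    have hsz2 : sL D α * z ≤ sL D α := by nlinarith [hz.2]
    constructor <;> nlinarith
  · intro h
    have h1 : tL D α ≤ y := ciSup_le fun n => (h n).1
    have h2 : y ≤ tL D α + sL D α :=
      ge_of_tendsto (tendsto_upper D α) (Filter.Eventually.of_forall fun n => (h n).2)
    rcases eq_or_lt_of_le (sL_nonneg D α) with hs0 | hs
    · refine ⟨0, ⟨le_rfl, zero_le_one⟩, ?_⟩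
      rw [← hs0] at h2 ⊢
      simp only [zero_mul, zero_add] at h2 ⊢
      linarith
    · refine ⟨(y - tL D α) / sL D α, ⟨div_nonneg (by linarith) hs.le, ?_⟩, ?_⟩
      · rw [div_le_one hs]; linarith
      · field_simp; ring

lemma X_isClosed : IsClosed D.X := by
  rw [X_eq_inter]
  apply isClosed_iInter
  intro n
  have hofc : Continuous fun q : D.Sigma × ℝ => ofc D q.1 n :=
    (continuous_ofc_fixed D n).comp continuous_fst
  have hsl : Continuous fun q : D.Sigma × ℝ => sl D q.1 n :=
    (continuous_sl_fixed D n).comp continuous_fst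
  exact IsClosed.inter (isClosed_le hofc continuous_snd)
    (isClosed_le continuous_snd (hofc.add hsl))

lemma X_subset (q : D.Sigma × ℝ) (h : q ∈ D.X) :
    q ∈ (Set.univ : Set D.Sigma) ×ˢ Set.Icc (0:ℝ) 1 := by
  obtain ⟨z, hz, hy⟩ := (mem_X_iff D q.1 q.2).mp ((Prod.mk.eta (p := q)) ▸ h)
  refine ⟨Set.mem_univ _, ?_, ?_⟩
  · rw [hy]
    have := tL_nonneg D q.1
    have := sL_nonneg D q.1
    nlinarith [hz.1]
  · rw [hy]
    have h1 := tL_add_sL_le_one D q.1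
    have := sL_nonneg D q.1
    nlinarith [hz.2]

lemma X_isCompact : IsCompact D.X :=
  IsCompact.of_isClosed_subset (isCompact_univ.prod isCompact_Icc)
    (X_isClosed D) (X_subset D)

instance X_compactSpace : CompactSpace ↥D.X :=
  isCompact_iff_compactSpace.mp (X_isCompact D)

/-! ### Properties of the regrouped data -/

lemma NF_infinite_of_infL (hL : InfL D) : {n | NFpred D n}.Infinite := by
  apply Set.Infinite.mono _ hL
  intro n hn
  simp only [Set.mem_setOf_eq] at hn ⊢
  refine ⟨D.fin0 n, ?_⟩
  rcases hn with h | h <;> rw [h]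
  exacts [lam0_ne_lam1, lam2_ne_lam1]

lemma qk_preimage_infinite (hNF : {n | NFpred D n}.Infinite) (A : Set ℕ) (hA : A.Infinite)
    (hsub : A ⊆ {n | NFpred D n}) : {k | qk D k ∈ A}.Infinite := by
  by_contra hfin
  rw [Set.not_infinite] at hfin
  have himg : A ⊆ qk D '' {k | qk D k ∈ A} := by
    intro n hn
    refine ⟨Nat.count (NFpred D) n, ?_, Nat.nth_count (hsub hn)⟩
    show qk D (Nat.count (NFpred D) n) ∈ A
    rw [show qk D (Nat.count (NFpred D) n) = n from Nat.nth_count (hsub hn)]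
    exact hn
  exact hA ((hfin.image (qk D)).subset himg)

lemma D2_fin0 (hNF : {n | NFpred D n}.Infinite) (k : ℕ) :
    (D2 D hNF).lam k ((D2 D hNF).fin0 k) = D.lam (qk D k) (D.fin0 (qk D k)) := by
  show D.lam (qk D k) ⟨((D2 D hNF).fin0 k).val / Wk D k (qk D k) % D.p (qk D k), _⟩ = _
  refine congrArg (D.lam (qk D k)) (Fin.ext ?_)
  show ((D2 D hNF).fin0 k).val / Wk D k (qk D k) % D.p (qk D k) = (D.fin0 (qk D k)).val
  have h0 : ((D2 D hNF).fin0 k).val = 0 := rfl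
  rw [h0, Nat.zero_div, Nat.zero_mod]
  rfl

lemma D2_finTop (hNF : {n | NFpred D n}.Infinite) (k : ℕ) :
    (D2 D hNF).lam k ((D2 D hNF).finTop k) = D.lam (qk D k) (D.finTop (qk D k)) := by
  show D.lam (qk D k) ⟨((D2 D hNF).finTop k).val / Wk D k (qk D k) % D.p (qk D k), _⟩ = _
  refine congrArg (D.lam (qk D k)) (Fin.ext ?_)
  show ((D2 D hNF).finTop k).val / Wk D k (qk D k) % D.p (qk D k) = (D.finTop (qk D k)).val
  have h0 : ((D2 D hNF).finTop k).val = Pk D k - 1 := rfl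
  have hPk := Pk_eq D hNF k
  have hW := Wk_pos D k (qk D k)
  have hp := D.hp (qk D k)
  have hdiv : (Pk D k - 1) / Wk D k (qk D k) = D.p (qk D k) - 1 := by
    apply Nat.div_eq_of_lt_le
    · rw [hPk]
      have : (D.p (qk D k) - 1) * Wk D k (qk D k) + Wk D k (qk D k)
          = Wk D k (qk D k) * D.p (qk D k) := by
        rw [← Nat.succ_mul, Nat.succ_eq_add_one]
        have : D.p (qk D k) - 1 + 1 = D.p (qk D k) := by omega
        rw [this, Nat.mul_comm]
      omega
    · rw [hPk]
      have : (D.p (qk D k) - 1 + 1) * Wk D k (qk D k) = Wk D k (qk D k) * D.p (qk D k) := by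
        have h1 : D.p (qk D k) - 1 + 1 = D.p (qk D k) := by omega
        rw [h1, Nat.mul_comm]
      have h2 : 0 < Wk D k (qk D k) * D.p (qk D k) := by positivity
      omega
  rw [h0, hdiv, Nat.mod_eq_of_lt (by omega)]
  rfl

def emb (hNF : {n | NFpred D n}.Infinite) (k : ℕ) (j : Fin (D.p (qk D k))) :
    Fin ((D2 D hNF).p k) :=
  ⟨j.val * Wk D k (qk D k), by
    have hPk := Pk_eq D hNF k
    have hW := Wk_pos D k (qk D k)
    have hj := j.isLt
    show j.val * Wk D k (qk D k) < Pk D k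
    rw [hPk]
    calc j.val * Wk D k (qk D k) < D.p (qk D k) * Wk D k (qk D k) :=
          (Nat.mul_lt_mul_right hW).mpr hj
      _ = Wk D k (qk D k) * D.p (qk D k) := Nat.mul_comm _ _⟩

lemma D2_emb (hNF : {n | NFpred D n}.Infinite) (k : ℕ) (j : Fin (D.p (qk D k))) :
    (D2 D hNF).lam k (emb D hNF k j) = D.lam (qk D k) j := by
  show D.lam (qk D k) ⟨(emb D hNF k j).val / Wk D k (qk D k) % D.p (qk D k), _⟩ = _
  refine congrArg (D.lam (qk D k)) (Fin.ext ?_)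
  show (emb D hNF k j).val / Wk D k (qk D k) % D.p (qk D k) = j.val
  have h0 : (emb D hNF k j).val = j.val * Wk D k (qk D k) := rfl
  rw [h0, Nat.mul_div_cancel _ (Wk_pos D k (qk D k)), Nat.mod_eq_of_lt j.isLt]

lemma infL2 (hNF : {n | NFpred D n}.Infinite) (hL : InfL D) : InfL (D2 D hNF) := by
  have hsubNF : {n | D.lam n (D.fin0 n) = lam0 ∨ D.lam n (D.fin0 n) = lam2} ⊆
      {n | NFpred D n} := by
    intro n hn
    simp only [Set.mem_setOf_eq] at hn ⊢
    refine ⟨D.fin0 n, ?_⟩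
    rcases hn with h | h <;> rw [h]
    exacts [lam0_ne_lam1, lam2_ne_lam1]
  have hpre := qk_preimage_infinite D hNF _ hL hsubNF
  apply Set.Infinite.mono _ hpre
  intro k hk
  simp only [Set.mem_setOf_eq] at hk ⊢
  rw [D2_fin0 D hNF k]
  exact hk

lemma infR2 (hNF : {n | NFpred D n}.Infinite)
    (hR : {n : ℕ | D.lam n (D.finTop n) = lam0 ∨ D.lam n (D.finTop n) = lam2}.Infinite) :
    {k : ℕ | (D2 D hNF).lam k ((D2 D hNF).finTop k) = lam0 ∨
      (D2 D hNF).lam k ((D2 D hNF).finTop k) = lam2}.Infinite := by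
  have hsubNF : {n | D.lam n (D.finTop n) = lam0 ∨ D.lam n (D.finTop n) = lam2} ⊆
      {n | NFpred D n} := by
    intro n hn
    simp only [Set.mem_setOf_eq] at hn ⊢
    refine ⟨D.finTop n, ?_⟩
    rcases hn with h | h <;> rw [h]
    exacts [lam0_ne_lam1, lam2_ne_lam1]
  have hpre := qk_preimage_infinite D hNF _ hR hsubNF
  apply Set.Infinite.mono _ hpre
  intro k hk
  simp only [Set.mem_setOf_eq] at hk ⊢
  rw [D2_finTop D hNF k]
  exact hk

lemma Q2_props (hNF : {n | NFpred D n}.Infinite) (HQ : ∀ n, (D.Q n).Nonempty) (k : ℕ) :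
    ((D2 D hNF).Q k).Nonempty ∧ ((D2 D hNF).Q k) ≠ Set.univ := by
  constructor
  · obtain ⟨j, hj⟩ := HQ (qk D k)
    exact ⟨emb D hNF k j, show (D2 D hNF).lam k _ = lam1 from (D2_emb D hNF k j).trans hj⟩
  · obtain ⟨j₀, hj₀⟩ := qk_mem D hNF k
    intro huniv
    have hmem : emb D hNF k j₀ ∈ (D2 D hNF).Q k := huniv ▸ Set.mem_univ _
    exact hj₀ ((D2_emb D hNF k j₀).symm.trans hmem)

lemma Q2_ncard (hNF : {n | NFpred D n}.Infinite) (HQ : ∀ n, (D.Q n).Nonempty) (k : ℕ) :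
    1 ≤ ((D2 D hNF).Q k).ncard ∧ ((D2 D hNF).Q k).ncard < (D2 D hNF).p k := by
  obtain ⟨hne, hnuniv⟩ := Q2_props D hNF HQ k
  constructor
  · exact (Set.ncard_pos (Set.toFinite _)).mpr hne
  · have hss : (D2 D hNF).Q k ⊂ Set.univ := Set.ssubset_univ_iff.mpr hnuniv
    have hlt := Set.ncard_lt_ncard hss Set.finite_univ
    rw [Set.ncard_univ, Nat.card_eq_fintype_card, Fintype.card_fin] at hlt
    exact hlt

lemma Qfin2 (hNF : {n | NFpred D n}.Infinite) (HQ : ∀ n, (D.Q n).Nonempty) :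
    {k : ℕ | (D2 D hNF).Q k = ∅}.Finite := by
  have hempty : {k : ℕ | (D2 D hNF).Q k = ∅} = ∅ := by
    ext k
    simp only [Set.mem_setOf_eq, Set.mem_empty_iff_false, iff_false]
    intro h
    exact absurd h (Set.nonempty_iff_ne_empty.mp (Q2_props D hNF HQ k).1)
  rw [hempty]
  exact Set.finite_empty

/-! ### The regrouping homeomorphism -/

def h2equiv (hNF : {n | NFpred D n}.Infinite) : ↥(D2 D hNF).X ≃ ↥D.X where
  toFun q := ⟨(ug D hNF q.1.1, q.1.2), by
    obtain ⟨z, hz, hy⟩ := (mem_X_iff (D2 D hNF) q.1.1 q.1.2).mp ((Prod.mk.eta (p := q.1)) ▸ q.2)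
    refine (mem_X_iff D _ _).mpr ⟨z, hz, ?_⟩
    rw [hy, sL_bridge D hNF, tL_bridge D hNF]⟩
  invFun q := ⟨(gr D hNF q.1.1, q.1.2), by
    obtain ⟨z, hz, hy⟩ := (mem_X_iff D q.1.1 q.1.2).mp ((Prod.mk.eta (p := q.1)) ▸ q.2)
    refine (mem_X_iff (D2 D hNF) _ _).mpr ⟨z, hz, ?_⟩
    rw [hy, sL_bridge D hNF, tL_bridge D hNF, ug_gr D hNF]⟩
  left_inv q := by
    apply Subtype.ext
    show (gr D hNF (ug D hNF q.1.1), q.1.2) = q.1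
    rw [gr_ug D hNF]
  right_inv q := by
    apply Subtype.ext
    show (ug D hNF (gr D hNF q.1.1), q.1.2) = q.1
    rw [ug_gr D hNF]

lemma h2_continuous (hNF : {n | NFpred D n}.Infinite) : Continuous (h2equiv D hNF) := by
  apply Continuous.subtype_mk
  refine Continuous.prodMk ?_ (continuous_snd.comp continuous_subtype_val)
  apply continuous_pi
  intro m
  have hfact : (fun q : ↥(D2 D hNF).X => ug D hNF q.1.1 m) =
      (fun v : Fin ((D2 D hNF).p (blk D m)) =>
        (⟨v.val / Wk D (blk D m) m % D.p m,
          Nat.mod_lt _ (by have := D.hp m; omega)⟩ : Fin (D.p m))) ∘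
      (fun q : ↥(D2 D hNF).X => q.1.1 (blk D m)) := rfl
  rw [hfact]
  exact continuous_of_discreteTopology.comp
    ((continuous_apply (blk D m)).comp (continuous_fst.comp continuous_subtype_val))

def h2homeo (hNF : {n | NFpred D n}.Infinite) : ↥(D2 D hNF).X ≃ₜ ↥D.X :=
  Continuous.homeoOfEquivCompactToT2 (f := h2equiv D hNF) (h2_continuous D hNF)

lemma h2homeo_val (hNF : {n | NFpred D n}.Infinite) (q : ↥(D2 D hNF).X) :
    (h2homeo D hNF q).val = (ug D hNF q.1.1, q.1.2) := rfl

lemma stepB_comm (hNF : {n | NFpred D n}.Infinite) (hL : InfL D)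
    (hR : {n : ℕ | D.lam n (D.finTop n) = lam0 ∨ D.lam n (D.finTop n) = lam2}.Infinite)
    (HQ : ∀ n, (D.Q n).Nonempty) (q : ↥(D2 D hNF).X) :
    h2homeo D hNF ((mkSys (D2 D hNF) (infL2 D hNF hL) (infR2 D hNF hR)
        (Qfin2 D hNF HQ)).T q) = Tfun D (h2homeo D hNF q) := by
  obtain ⟨z, hz, hy⟩ := (mem_X_iff (D2 D hNF) q.1.1 q.1.2).mp ((Prod.mk.eta (p := q.1)) ▸ q.2)
  set S2 := mkSys (D2 D hNF) (infL2 D hNF hL) (infR2 D hNF hR) (Qfin2 D hNF HQ) with hS2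
  have hT2 : (S2.T q).val = ((D2 D hNF).addOne q.1.1,
      sL (D2 D hNF) ((D2 D hNF).addOne q.1.1) * z + tL (D2 D hNF) ((D2 D hNF).addOne q.1.1)) :=
    mkSys_T_spec (D2 D hNF) _ _ _ q z hz (by rw [hy])
  apply Subtype.ext
  have hLHS : (h2homeo D hNF (S2.T q)).val =
      (ug D hNF ((D2 D hNF).addOne q.1.1),
        sL (D2 D hNF) ((D2 D hNF).addOne q.1.1) * z +
          tL (D2 D hNF) ((D2 D hNF).addOne q.1.1)) := by
    exact (h2homeo_val D hNF (S2.T q)).trans (congrArg (fun p => (ug D hNF p.1, p.2)) hT2)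
  have hq' : (h2homeo D hNF q).val =
      (ug D hNF q.1.1, sL D (ug D hNF q.1.1) * z + tL D (ug D hNF q.1.1)) := by
    rw [h2homeo_val, hy, sL_bridge D hNF, tL_bridge D hNF]
  have hRHS : (Tfun D (h2homeo D hNF q)).val =
      (D.addOne (ug D hNF q.1.1),
        sL D (D.addOne (ug D hNF q.1.1)) * z + tL D (D.addOne (ug D hNF q.1.1))) := by
    have hfst : (h2homeo D hNF q).val.1 = ug D hNF q.1.1 := by rw [hq']
    have := Tfun_spec D hL (h2homeo D hNF q) z hz (by rw [hq'])
    rw [hfst] at this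
    exact this
  rw [hLHS, hRHS, sL_bridge D hNF, tL_bridge D hNF, ug_addOne D hNF]

end StepB


end FAAux

namespace FAAux
open FAData Set
open scoped Classical

/-! ### Step A : make every `Q n` nonempty -/

section StepA

variable (S : FASystem)

def Ebd : ℕ := (S.Qfin.toFinset.sup id) + 1

lemma lt_Ebd {n : ℕ} (h : S.toFAData.Q n = ∅) : n < Ebd S := by
  have hmem : n ∈ S.Qfin.toFinset := S.Qfin.mem_toFinset.mpr h
  have := Finset.le_sup (f := id) hmem
  simp only [id] at this
  unfold Ebd
  omega

def D1 : FAData where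
  p := S.toFAData.p
  hp := S.toFAData.hp
  lam := fun n j => if S.toFAData.Q n = ∅ ∧ j.val = 0 then lam1 else S.toFAData.lam n j
  hlam := fun n j => by
    split
    · exact Or.inr (Or.inl rfl)
    · exact S.toFAData.hlam n j

lemma D1_lam_of_ge {n : ℕ} (h : Ebd S ≤ n) (j : Fin (S.toFAData.p n)) :
    (D1 S).lam n j = S.toFAData.lam n j := by
  show (if S.toFAData.Q n = ∅ ∧ j.val = 0 then lam1 else S.toFAData.lam n j) = _
  rw [if_neg]
  rintro ⟨h1, _⟩
  exact absurd (lt_Ebd S h1) (by omega)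

lemma D1_lam_of_ne {n : ℕ} (j : Fin (S.toFAData.p n)) (h : j.val ≠ 0) :
    (D1 S).lam n j = S.toFAData.lam n j := by
  show (if S.toFAData.Q n = ∅ ∧ j.val = 0 then lam1 else S.toFAData.lam n j) = _
  rw [if_neg]
  rintro ⟨_, h2⟩
  exact h h2

lemma Q1_nonempty (n : ℕ) : ((D1 S).Q n).Nonempty := by
  by_cases h : S.toFAData.Q n = ∅
  · refine ⟨(D1 S).fin0 n, ?_⟩
    show (if S.toFAData.Q n = ∅ ∧ ((D1 S).fin0 n).val = 0 then lam1 else _) = lam1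
    rw [if_pos ⟨h, rfl⟩]
  · obtain ⟨j, hj⟩ := Set.nonempty_iff_ne_empty.mpr h
    refine ⟨j, ?_⟩
    show (if S.toFAData.Q n = ∅ ∧ j.val = 0 then lam1 else S.toFAData.lam n j) = lam1
    split
    · rfl
    · exact hj

lemma Q1fin : {n : ℕ | (D1 S).Q n = ∅}.Finite := by
  have : {n : ℕ | (D1 S).Q n = ∅} = ∅ := by
    ext n
    simp only [Set.mem_setOf_eq, Set.mem_empty_iff_false, iff_false]
    intro h
    exact absurd h (Set.nonempty_iff_ne_empty.mp (Q1_nonempty S n))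
  rw [this]
  exact Set.finite_empty

lemma infL1 : InfL (D1 S) := by
  apply Set.Infinite.mono _ (S.infLeft.diff S.Qfin)
  rintro n ⟨hn1, hn2⟩
  simp only [Set.mem_setOf_eq] at hn1 hn2 ⊢
  have : (D1 S).lam n ((D1 S).fin0 n) = S.toFAData.lam n (S.toFAData.fin0 n) := by
    show (if S.toFAData.Q n = ∅ ∧ (S.toFAData.fin0 n).val = 0 then lam1
      else S.toFAData.lam n (S.toFAData.fin0 n)) = S.toFAData.lam n (S.toFAData.fin0 n)
    rw [if_neg]
    rintro ⟨h1, _⟩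
    exact hn2 h1
  rw [this]
  exact hn1

lemma infR1 : {n : ℕ | (D1 S).lam n ((D1 S).finTop n) = lam0 ∨
    (D1 S).lam n ((D1 S).finTop n) = lam2}.Infinite := by
  have heq : ∀ n, (D1 S).lam n ((D1 S).finTop n) = S.toFAData.lam n (S.toFAData.finTop n) := by
    intro n
    apply D1_lam_of_ne
    show S.toFAData.p n - 1 ≠ 0
    have := S.toFAData.hp n
    omega
  have : {n : ℕ | (D1 S).lam n ((D1 S).finTop n) = lam0 ∨ (D1 S).lam n ((D1 S).finTop n) = lam2}
      = {n : ℕ | S.toFAData.lam n (S.toFAData.finTop n) = lam0 ∨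
          S.toFAData.lam n (S.toFAData.finTop n) = lam2} := by
    ext n; rw [Set.mem_setOf_eq, Set.mem_setOf_eq, heq n]
  rw [this]
  exact S.infRight

/-- The intermediate system with every `Q n` nonempty. -/
def S1 : FASystem := mkSys (D1 S) (infL1 S) (infR1 S) (Q1fin S)

/-! ### The conjugacy between `S1` and `S` -/

def gsl (α : S.toFAData.Sigma) : ℝ := sl S.toFAData α (Ebd S) / sl (D1 S) α (Ebd S)

def gof (α : S.toFAData.Sigma) : ℝ :=
  ofc S.toFAData α (Ebd S) - gsl S α * ofc (D1 S) α (Ebd S)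

lemma gsl_pos (α : S.toFAData.Sigma) : 0 < gsl S α :=
  div_pos (sl_pos S.toFAData α (Ebd S)) (sl_pos (D1 S) α (Ebd S))

lemma D1_carryIn (α : S.toFAData.Sigma) : ∀ n, (D1 S).carryIn α n = S.toFAData.carryIn α n
  | 0 => rfl
  | n + 1 => by
    show (if S.toFAData.p n ≤ (α n).val + (D1 S).carryIn α n then 1 else 0) =
      (if S.toFAData.p n ≤ (α n).val + S.toFAData.carryIn α n then 1 else 0)
    rw [D1_carryIn α n]

lemma D1_addOne : (D1 S).addOne = S.toFAData.addOne := by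
  funext α n
  apply Fin.ext
  show ((α n).val + (D1 S).carryIn α n) % S.toFAData.p n =
    ((α n).val + S.toFAData.carryIn α n) % S.toFAData.p n
  rw [D1_carryIn S α n]

lemma keyA (α : S.toFAData.Sigma) :
    ∀ n, Ebd S ≤ n → ∀ z : ℝ,
      S.toFAData.lamComp α n z = gsl S α * (D1 S).lamComp α n z + gof S α := by
  intro n hn
  induction n, hn using Nat.le_induction with
  | base =>
    intro z
    rw [lamComp_affine, lamComp_affine (D1 S) α]
    have hne := (sl_pos (D1 S) α (Ebd S)).ne'
    unfold gof gsl
    field_simp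
    ring
  | succ n hn ih =>
    intro z
    have h1 : S.toFAData.lamComp α (n+1) z =
        S.toFAData.lamComp α n (S.toFAData.lam n (α n) z) := rfl
    have h2 : (D1 S).lamComp α (n+1) z = (D1 S).lamComp α n ((D1 S).lam n (α n) z) := rfl
    rw [h1, h2, D1_lam_of_ge S (by omega)]
    exact ih _

lemma lim_relA (α : S.toFAData.Sigma) (z : ℝ) :
    sL S.toFAData α * z + tL S.toFAData α =
      gsl S α * (sL (D1 S) α * z + tL (D1 S) α) + gof S α := by
  have h1 := tendsto_lamComp S.toFAData α z
  have h2 := (((tendsto_lamComp (D1 S) α z).const_mul (gsl S α)).add_const (gof S α))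
  refine tendsto_nhds_unique h1 (h2.congr' ?_)
  filter_upwards [eventually_ge_atTop (Ebd S)] with n hn
  exact (keyA S α n hn z).symm

lemma memX1_iff (α : S.toFAData.Sigma) (y : ℝ) :
    (α, y) ∈ (D1 S).X ↔ ∃ z ∈ Set.Icc (0:ℝ) 1, y = sL (D1 S) α * z + tL (D1 S) α :=
  mem_X_iff (D1 S) α y

def h1toFun (q : (D1 S).X) : S.toFAData.X :=
  ⟨(q.1.1, gsl S q.1.1 * q.1.2 + gof S q.1.1), by
    obtain ⟨z, hz, hy⟩ := (mem_X_iff (D1 S) q.1.1 q.1.2).mp ((Prod.mk.eta (p := q.1)) ▸ q.2)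
    refine (mem_X_iff S.toFAData _ _).mpr ⟨z, hz, ?_⟩
    rw [hy, lim_relA S q.1.1 z]⟩

def h1invFun (q : S.toFAData.X) : (D1 S).X :=
  ⟨(q.1.1, (q.1.2 - gof S q.1.1) / gsl S q.1.1), by
    obtain ⟨z, hz, hy⟩ := (mem_X_iff S.toFAData q.1.1 q.1.2).mp ((Prod.mk.eta (p := q.1)) ▸ q.2)
    refine (mem_X_iff (D1 S) _ _).mpr ⟨z, hz, ?_⟩
    rw [hy, lim_relA S]
    have hne := (gsl_pos S q.1.1).ne'
    field_simp; ring⟩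

def h1equiv : (D1 S).X ≃ S.toFAData.X where
  toFun := h1toFun S
  invFun := h1invFun S
  left_inv := fun q => by
    apply Subtype.ext
    show ((q.1.1 : S.toFAData.Sigma), _) = q.1
    have hne := (gsl_pos S q.1.1).ne'
    rw [← Prod.mk.eta (p := q.1)]
    refine Prod.ext rfl ?_
    show (gsl S q.1.1 * q.1.2 + gof S q.1.1 - gof S q.1.1) / gsl S q.1.1 = q.1.2
    field_simp; ring
  right_inv := fun q => by
    apply Subtype.ext
    have hne := (gsl_pos S q.1.1).ne'
    rw [← Prod.mk.eta (p := q.1)]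
    refine Prod.ext rfl ?_
    show gsl S q.1.1 * ((q.1.2 - gof S q.1.1) / gsl S q.1.1) + gof S q.1.1 = q.1.2
    field_simp; ring

lemma continuous_gsl : Continuous (gsl S) :=
  (continuous_sl_fixed S.toFAData (Ebd S)).div (continuous_sl_fixed (D1 S) (Ebd S))
    fun α => (sl_pos (D1 S) α (Ebd S)).ne'

lemma continuous_gof : Continuous (gof S) :=
  (continuous_ofc_fixed S.toFAData (Ebd S)).sub
    ((continuous_gsl S).mul (continuous_ofc_fixed (D1 S) (Ebd S)))

def h1homeo : ((D1 S).X : Set _) ≃ₜ (S.toFAData.X : Set _) where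
  toEquiv := h1equiv S
  continuous_toFun := by
    apply Continuous.subtype_mk
    have hc1 : Continuous fun q : (D1 S).X => q.1.1 :=
      (continuous_fst.comp continuous_subtype_val)
    have hc2 : Continuous fun q : (D1 S).X => q.1.2 :=
      (continuous_snd.comp continuous_subtype_val)
    exact hc1.prodMk ((((continuous_gsl S).comp hc1).mul hc2).add
      ((continuous_gof S).comp hc1))
  continuous_invFun := by
    apply Continuous.subtype_mk
    have hc1 : Continuous fun q : S.toFAData.X => q.1.1 :=
      (continuous_fst.comp continuous_subtype_val)
    have hc2 : Continuous fun q : S.toFAData.X => q.1.2 :=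
      (continuous_snd.comp continuous_subtype_val)
    exact hc1.prodMk ((hc2.sub ((continuous_gof S).comp hc1)).div
      ((continuous_gsl S).comp hc1) (fun q => (gsl_pos S q.1.1).ne'))

lemma ST_spec (q : S.toFAData.X) (z : ℝ) (hz : z ∈ Set.Icc (0:ℝ) 1)
    (hy : (q : S.toFAData.Sigma × ℝ).2 = sL S.toFAData q.1.1 * z + tL S.toFAData q.1.1) :
    (S.T q : S.toFAData.Sigma × ℝ) =
      (S.toFAData.addOne q.1.1,
        sL S.toFAData (S.toFAData.addOne q.1.1) * z + tL S.toFAData (S.toFAData.addOne q.1.1)) := by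
  obtain ⟨⟨α, y⟩, hq⟩ := q
  simp only at hy ⊢
  have hlim : Tendsto (fun n => S.toFAData.lamComp α n z) atTop (𝓝 y) := by
    rw [hy]; exact tendsto_lamComp S.toFAData α z
  exact S.hT α z y _ hz hlim (tendsto_lamComp S.toFAData (S.toFAData.addOne α) z) hq

lemma stepA_comm (q : (S1 S).toFAData.X) :
    (h1homeo S) ((S1 S).T q) = S.T ((h1homeo S) q) := by
  obtain ⟨z, hz, hy⟩ := (mem_X_iff (D1 S) q.1.1 q.1.2).mp ((Prod.mk.eta (p := q.1)) ▸ q.2)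
  have hT1 : ((S1 S).T q).val =
      ((D1 S).addOne q.1.1,
        sL (D1 S) ((D1 S).addOne q.1.1) * z + tL (D1 S) ((D1 S).addOne q.1.1)) :=
    mkSys_T_spec (D1 S) (infL1 S) (infR1 S) (Q1fin S) q z hz (by rw [hy])
  apply Subtype.ext
  have hLHS : ((h1homeo S) ((S1 S).T q)).val =
      ((D1 S).addOne q.1.1,
        gsl S ((D1 S).addOne q.1.1) *
            (sL (D1 S) ((D1 S).addOne q.1.1) * z + tL (D1 S) ((D1 S).addOne q.1.1)) +
          gof S ((D1 S).addOne q.1.1)) := by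
    show (((S1 S).T q).val.1, gsl S (((S1 S).T q).val.1) * ((S1 S).T q).val.2 +
      gof S (((S1 S).T q).val.1)) = _
    rw [hT1]; rfl
  have hq' : ((h1homeo S) q).val = (q.1.1, sL S.toFAData q.1.1 * z + tL S.toFAData q.1.1) := by
    show (q.1.1, gsl S q.1.1 * q.1.2 + gof S q.1.1) = _
    rw [hy, ← lim_relA S q.1.1 z]
  have hRHS : (S.T ((h1homeo S) q)).val =
      (S.toFAData.addOne q.1.1,
        sL S.toFAData (S.toFAData.addOne q.1.1) * z +
          tL S.toFAData (S.toFAData.addOne q.1.1)) := by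
    have hfst : ((h1homeo S) q).val.1 = q.1.1 := by rw [hq']
    have := ST_spec S ((h1homeo S) q) z hz (by rw [hq'] )
    rw [hfst] at this
    exact this
  rw [hLHS, hRHS, ← lim_relA S ((D1 S).addOne q.1.1) z, D1_addOne]; rfl

end StepA

end FAAux

/-- Every Floyd–Auslander system is topologically conjugate to a
Floyd–Auslander system satisfying the standing assumption `1 ≤ |Q(n)| < p_n`. -/
theorem floyd_auslander_conjugate_to_standing_assumption (S : FASystem) :
    ∃ S' : FASystem,
      (∀ n, 1 ≤ (S'.toFAData.Q n).ncard ∧ (S'.toFAData.Q n).ncard < S'.toFAData.p n) ∧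
      ∃ h : ↥S'.toFAData.X ≃ₜ ↥S.toFAData.X, ∀ q, h (S'.T q) = S.T (h q) := by
  have hNF : {n | FAAux.NFpred (FAAux.D1 S) n}.Infinite :=
    FAAux.NF_infinite_of_infL (FAAux.D1 S) (FAAux.infL1 S)
  refine ⟨FAAux.mkSys (FAAux.D2 (FAAux.D1 S) hNF)
      (FAAux.infL2 (FAAux.D1 S) hNF (FAAux.infL1 S))
      (FAAux.infR2 (FAAux.D1 S) hNF (FAAux.infR1 S))
      (FAAux.Qfin2 (FAAux.D1 S) hNF (FAAux.Q1_nonempty S)), ?_, ?_⟩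
  · intro n
    exact FAAux.Q2_ncard (FAAux.D1 S) hNF (FAAux.Q1_nonempty S) n
  · refine ⟨(FAAux.h2homeo (FAAux.D1 S) hNF).trans (FAAux.h1homeo S), ?_⟩
    intro q
    have h1 := FAAux.stepB_comm (FAAux.D1 S) hNF (FAAux.infL1 S) (FAAux.infR1 S)
      (FAAux.Q1_nonempty S) q
    have h2 := FAAux.stepA_comm S ((FAAux.h2homeo (FAAux.D1 S) hNF) q)
    show FAAux.h1homeo S ((FAAux.h2homeo (FAAux.D1 S) hNF) _) = _
    rw [h1]
    exact h2
end
end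

section
/- Let (X,T) be a minimal Floyd–Auslander system. If Λ = {n ∈ ℕ : |Q(n)| ≥ 2} is finite, then (X,T) is tame, i.e. the cardinality of its Ellis semigroup E(X) is at most 2^ℵ₀. -/
open Filter Topology

noncomputable section

namespace FAData

variable (D : FAData)

lemma lam0_ne_lam1 : lam0 ≠ lam1 := by
  intro h
  have := congrFun h 1
  simp [lam0, lam1] at this


lemma lam2_ne_lam1 : lam2 ≠ lam1 := by
  intro h
  have := congrFun h 0
  simp [lam2, lam1] at this


open Classical in
/-- slope of `lam n j` -/
def slp (n : ℕ) (j : Fin (D.p n)) : ℝ := if D.lam n j = lam1 then 1 else 1/2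

lemma slp_pos (n : ℕ) (j : Fin (D.p n)) : 0 < D.slp n j := by
  unfold slp; split <;> norm_num

lemma slp_le_one (n : ℕ) (j : Fin (D.p n)) : D.slp n j ≤ 1 := by
  unfold slp; split <;> norm_num

lemma slp_of_not_mem {n : ℕ} {j : Fin (D.p n)} (h : j ∉ D.Q n) : D.slp n j = 1/2 := by
  unfold slp
  have h' : ¬(D.lam n j = lam1) := h
  rw [if_neg h']

lemma lam_affine (n : ℕ) (j : Fin (D.p n)) (x : ℝ) :
    D.lam n j x = D.slp n j * x + D.lam n j 0 := by
  unfold slp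
  rcases D.hlam n j with h | h | h <;> rw [h]
  · rw [if_neg lam0_ne_lam1]; simp [lam0]; ring
  · rw [if_pos rfl]; simp [lam1]
  · rw [if_neg lam2_ne_lam1]; simp [lam2]; ring

lemma lam_maps (n : ℕ) (j : Fin (D.p n)) {x : ℝ} (hx : x ∈ Set.Icc (0:ℝ) 1) :
    D.lam n j x ∈ Set.Icc (0:ℝ) 1 := by
  obtain ⟨h0, h1⟩ := hx
  rcases D.hlam n j with h | h | h <;> rw [h] <;>
    exact ⟨by simp [lam0, lam1, lam2]; linarith, by simp [lam0, lam1, lam2]; linarith⟩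

/-- product of slopes -/
def Lp (α : D.Sigma) (n : ℕ) : ℝ := ∏ i ∈ Finset.range n, D.slp i (α i)

lemma Lp_zero (α : D.Sigma) : D.Lp α 0 = 1 := by simp [Lp]

lemma Lp_succ (α : D.Sigma) (n : ℕ) : D.Lp α (n+1) = D.Lp α n * D.slp n (α n) := by
  simp [Lp, Finset.prod_range_succ]

lemma Lp_pos (α : D.Sigma) (n : ℕ) : 0 < D.Lp α n :=
  Finset.prod_pos fun i _ => D.slp_pos i (α i)

lemma Lp_antitone (α : D.Sigma) : Antitone (D.Lp α) := by
  apply antitone_nat_of_succ_le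
  intro n
  rw [Lp_succ]
  calc D.Lp α n * D.slp n (α n) ≤ D.Lp α n * 1 :=
        mul_le_mul_of_nonneg_left (D.slp_le_one n (α n)) (D.Lp_pos α n).le
    _ = D.Lp α n := mul_one _

lemma Lp_le_one (α : D.Sigma) (n : ℕ) : D.Lp α n ≤ 1 := by
  have := D.Lp_antitone α (Nat.zero_le n)
  rwa [Lp_zero] at this

lemma lamComp_affine (α : D.Sigma) (n : ℕ) (x : ℝ) :
    D.lamComp α n x = D.Lp α n * x + D.lamComp α n 0 := by
  induction n generalizing x with
  | zero => simp [lamComp, Lp]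
  | succ n ih =>
    show D.lamComp α n (D.lam n (α n) x) = _
    rw [ih (D.lam n (α n) x), D.lam_affine n (α n) x]
    have h0 : D.lamComp α (n+1) 0 = D.Lp α n * (D.lam n (α n) 0) + D.lamComp α n 0 := by
      show D.lamComp α n (D.lam n (α n) 0) = _
      rw [ih]
    rw [h0, Lp_succ]
    ring

lemma lamComp_sub (α : D.Sigma) (n : ℕ) (x y : ℝ) :
    D.lamComp α n x - D.lamComp α n y = D.Lp α n * (x - y) := by
  rw [D.lamComp_affine α n x, D.lamComp_affine α n y]; ring

lemma lamComp_maps (α : D.Sigma) (n : ℕ) {z : ℝ} (hz : z ∈ Set.Icc (0:ℝ) 1) :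
    D.lamComp α n z ∈ Set.Icc (0:ℝ) 1 := by
  induction n generalizing z with
  | zero => exact hz
  | succ n ih => exact ih (D.lam_maps n (α n) hz)

/-- composition of `lam` for indices in `[m, m+k)` -/
def midComp (α : D.Sigma) (m : ℕ) : ℕ → ℝ → ℝ
  | 0 => id
  | k+1 => midComp α m k ∘ D.lam (m+k) (α (m+k))

lemma lamComp_midComp (α : D.Sigma) (m : ℕ) (k : ℕ) :
    D.lamComp α (m+k) = D.lamComp α m ∘ D.midComp α m k := by
  induction k with
  | zero => rfl
  | succ k ih =>
    show D.lamComp α ((m+k)+1) = _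
    have h : D.lamComp α ((m+k)+1) = D.lamComp α (m+k) ∘ D.lam (m+k) (α (m+k)) := rfl
    rw [h, ih]
    rfl

lemma midComp_maps (α : D.Sigma) (m : ℕ) (k : ℕ) {z : ℝ} (hz : z ∈ Set.Icc (0:ℝ) 1) :
    D.midComp α m k z ∈ Set.Icc (0:ℝ) 1 := by
  induction k generalizing z with
  | zero => exact hz
  | succ k ih => exact ih (D.lam_maps (m+k) (α (m+k)) hz)

lemma midComp_congr {α β : D.Sigma} (m : ℕ) (h : ∀ n, m ≤ n → α n = β n) (k : ℕ) :
    D.midComp α m k = D.midComp β m k := by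
  induction k with
  | zero => rfl
  | succ k ih =>
    show D.midComp α m k ∘ D.lam (m+k) (α (m+k)) = D.midComp β m k ∘ D.lam (m+k) (β (m+k))
    rw [ih, h (m+k) (Nat.le_add_right m k)]


/-- The exceptional set: eventually all digits in `Q`. -/
def Eset : Set D.Sigma := {β | ∃ m, ∀ n, m ≤ n → β n ∈ D.Q n}

lemma not_Eset {β : D.Sigma} (hβ : β ∉ D.Eset) : ∀ m, ∃ n, m ≤ n ∧ β n ∉ D.Q n := by
  intro m
  by_contra h
  push_neg at h
  exact hβ ⟨m, h⟩

lemma Lp_tendsto_zero {α : D.Sigma} (hβ : ∀ m, ∃ n, m ≤ n ∧ α n ∉ D.Q n) :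
    Tendsto (D.Lp α) atTop (𝓝 0) := by
  have key : ∀ j : ℕ, ∃ N, D.Lp α N ≤ (1/2 : ℝ)^j := by
    intro j
    induction j with
    | zero => exact ⟨0, by simp [Lp]⟩
    | succ j ih =>
      obtain ⟨N, hN⟩ := ih
      obtain ⟨n, hn, hq⟩ := hβ N
      refine ⟨n+1, ?_⟩
      rw [Lp_succ, D.slp_of_not_mem hq]
      have h1 : D.Lp α n ≤ D.Lp α N := D.Lp_antitone α hn
      have h2 : (0:ℝ) < (1/2)^j := by positivity
      rw [pow_succ]
      nlinarith [D.Lp_pos α n]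
  rw [Metric.tendsto_atTop]
  intro ε hε
  obtain ⟨j, hj⟩ := exists_pow_lt_of_lt_one hε (by norm_num : (1:ℝ)/2 < 1)
  obtain ⟨N, hN⟩ := key j
  refine ⟨N, fun n hn => ?_⟩
  rw [Real.dist_eq, sub_zero, abs_of_pos (D.Lp_pos α n)]
  exact lt_of_le_of_lt (le_trans (D.Lp_antitone α hn) hN) hj

lemma fiber_unique {β : D.Sigma} (hβ : β ∉ D.Eset) {y y' : ℝ}
    (h : (β, y) ∈ D.X) (h' : (β, y') ∈ D.X) : y = y' := by
  obtain ⟨z, hz, hc⟩ := h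
  obtain ⟨z', hz', hc'⟩ := h'
  have hd : Tendsto (fun n => D.lamComp β n z - D.lamComp β n z') atTop (𝓝 (y - y')) :=
    hc.sub hc'
  have hd0 : Tendsto (fun n => D.lamComp β n z - D.lamComp β n z') atTop (𝓝 0) := by
    refine squeeze_zero_norm (fun n => ?_) (D.Lp_tendsto_zero (D.not_Eset hβ))
    rw [D.lamComp_sub]
    rw [Real.norm_eq_abs, abs_mul, abs_of_pos (D.Lp_pos β n)]
    have : |z - z'| ≤ 1 := by
      rw [abs_le]
      constructor <;> [linarith [hz.1, hz'.2]; linarith [hz.2, hz'.1]]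
    nlinarith [D.Lp_pos β n]
  have := tendsto_nhds_unique hd hd0
  linarith

lemma conv_of_not_Eset {β : D.Sigma} (hβ : β ∉ D.Eset) {z : ℝ} (hz : z ∈ Set.Icc (0:ℝ) 1) :
    ∃ y, Tendsto (fun n => D.lamComp β n z) atTop (𝓝 y) := by
  have hdecomp : ∀ N n, N ≤ n → ∃ w ∈ Set.Icc (0:ℝ) 1, D.lamComp β n z = D.lamComp β N w := by
    intro N n hNn
    obtain ⟨k, rfl⟩ := Nat.exists_eq_add_of_le hNn
    exact ⟨D.midComp β N k z, D.midComp_maps β N k hz, by rw [D.lamComp_midComp β N k]; rfl⟩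
  have hcauchy : CauchySeq (fun n => D.lamComp β n z) := by
    apply cauchySeq_of_le_tendsto_0 (D.Lp β) _ (D.Lp_tendsto_zero (D.not_Eset hβ))
    intro n m N hn hm
    obtain ⟨w, hw, hew⟩ := hdecomp N n hn
    obtain ⟨w', hw', hew'⟩ := hdecomp N m hm
    rw [hew, hew', Real.dist_eq, D.lamComp_sub]
    rw [abs_mul, abs_of_pos (D.Lp_pos β N)]
    have : |w - w'| ≤ 1 := by
      rw [abs_le]
      constructor <;> [linarith [hw.1, hw'.2]; linarith [hw.2, hw'.1]]
    nlinarith [D.Lp_pos β N]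
  exact cauchySeq_tendsto_of_complete hcauchy

lemma conv_of_Eset {β : D.Sigma} {m : ℕ} (hm : ∀ n, m ≤ n → β n ∈ D.Q n) (z : ℝ) :
    Tendsto (fun n => D.lamComp β n z) atTop (𝓝 (D.lamComp β m z)) := by
  have hconst : ∀ n, m ≤ n → D.lamComp β n z = D.lamComp β m z := by
    intro n hn
    induction n, hn using Nat.le_induction with
    | base => rfl
    | succ n hn ih =>
      have hq : D.lam n (β n) = lam1 := hm n hn
      show D.lamComp β n (D.lam n (β n) z) = _
      rw [hq]
      exact ih
  exact tendsto_atTop_of_eventually_const hconst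

lemma fiber_nonempty (β : D.Sigma) : ∃ y, (β, y) ∈ D.X := by
  by_cases hβ : β ∈ D.Eset
  · obtain ⟨m, hm⟩ := hβ
    exact ⟨D.lamComp β m 0, 0, ⟨le_refl 0, zero_le_one⟩, D.conv_of_Eset hm 0⟩
  · obtain ⟨y, hy⟩ := D.conv_of_not_Eset hβ (⟨le_refl 0, zero_le_one⟩ : (0:ℝ) ∈ Set.Icc (0:ℝ) 1)
    exact ⟨y, 0, ⟨le_refl 0, zero_le_one⟩, hy⟩

lemma Eset_countable (N : ℕ) (hN : ∀ n, N ≤ n → ¬ 2 ≤ (D.Q n).ncard) : D.Eset.Countable := by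
  have hsub : ∀ n, N ≤ n → (D.Q n).Subsingleton := by
    intro n hn
    have h1 : (D.Q n).ncard ≤ 1 := by have := hN n hn; omega
    intro a ha b hb
    exact (Set.ncard_le_one_iff (Set.toFinite _)).1 h1 ha hb
  have hU : D.Eset ⊆ ⋃ m : ℕ, {β : D.Sigma | ∀ n, m ≤ n → β n ∈ D.Q n} := by
    intro β ⟨m, hm⟩
    exact Set.mem_iUnion.2 ⟨m, hm⟩
  apply Set.Countable.mono hU
  apply Set.countable_iUnion
  intro m
  set M := max m N with hM
  have : Set.Finite {β : D.Sigma | ∀ n, m ≤ n → β n ∈ D.Q n} := by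
    apply Set.Finite.of_finite_image (f := fun β => fun i : Fin M => β i.val)
    · exact Set.toFinite _
    · intro β hβ γ hγ him
      funext n
      rcases Nat.lt_or_ge n M with h | h
      · exact congrFun him ⟨n, h⟩
      · exact hsub n (le_trans (le_max_right m N) h) (hβ n (by omega)) (hγ n (by omega))
  exact this.countable


lemma carryIn_zero (α : D.Sigma) : D.carryIn α 0 = 1 := rfl

lemma carryIn_succ (α : D.Sigma) (n : ℕ) :
    D.carryIn α (n+1) = if D.p n ≤ (α n).val + D.carryIn α n then 1 else 0 := rfl

lemma carryIn_le_one (α : D.Sigma) (n : ℕ) : D.carryIn α n ≤ 1 := by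
  cases n with
  | zero => exact le_refl 1
  | succ n => rw [carryIn_succ]; split <;> omega

lemma addOne_val (α : D.Sigma) (n : ℕ) :
    (D.addOne α n).val = ((α n).val + D.carryIn α n) % D.p n := rfl

lemma addOne_top {α : D.Sigma} (h : ∀ n, α n = D.finTop n) (n : ℕ) :
    D.addOne α n = D.fin0 n := by
  have hc : ∀ k, D.carryIn α k = 1 := by
    intro k
    induction k with
    | zero => rfl
    | succ k ih =>
      rw [carryIn_succ, ih, h k]
      have := D.hp k
      rw [if_pos (by simp [finTop]; omega)]
  apply Fin.ext
  rw [addOne_val, hc, h n]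
  have hpn := D.hp n
  show ((D.finTop n).val + 1) % D.p n = (D.fin0 n).val
  simp only [finTop, fin0]
  have h1 : D.p n - 1 + 1 = D.p n := by omega
  rw [h1, Nat.mod_self]

lemma addOne_eventually {α : D.Sigma} (h : ¬ ∀ n, α n = D.finTop n) :
    ∃ m, ∀ n, m < n → D.addOne α n = α n := by
  push_neg at h
  have hex : ∃ m, α m ≠ D.finTop m := h
  classical
  set m := Nat.find hex with hm
  have hmn : α m ≠ D.finTop m := Nat.find_spec hex
  have hbelow : ∀ k, k < m → α k = D.finTop k := fun k hk => by
    by_contra hc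
    exact Nat.find_min hex hk hc
  have hcup : ∀ k, k ≤ m → D.carryIn α k = 1 := by
    intro k hk
    induction k with
    | zero => rfl
    | succ k ih =>
      rw [carryIn_succ, ih (by omega), hbelow k (by omega)]
      have := D.hp k
      rw [if_pos (by simp [finTop]; omega)]
  have hvm : (α m).val < D.p m - 1 := by
    have h1 := (α m).isLt
    have h2 : (α m).val ≠ D.p m - 1 := fun hc => hmn (Fin.ext (by simp [finTop, hc]))
    omega
  have hcdown : ∀ n, m < n → D.carryIn α n = 0 := by
    intro n hn
    induction n, hn using Nat.le_induction with
    | base =>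
      rw [carryIn_succ, hcup m (le_refl m)]
      rw [if_neg (by omega)]
    | succ n hn ih =>
      rw [carryIn_succ, ih]
      have := (α n).isLt
      rw [if_neg (by omega)]
  refine ⟨m, fun n hn => ?_⟩
  apply Fin.ext
  rw [addOne_val, hcdown n hn]
  exact Nat.mod_eq_of_lt (by have := (α n).isLt; omega)

/-- mixed-radix base -/
def Pk : ℕ → ℕ
  | 0 => 1
  | k+1 => Pk k * D.p k

lemma Pk_pos (k : ℕ) : 0 < D.Pk k := by
  induction k with
  | zero => exact one_pos
  | succ k ih =>
    show 0 < D.Pk k * D.p k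
    have := D.hp k
    positivity

/-- mixed-radix value of the first `k` digits -/
def valk (α : D.Sigma) : ℕ → ℕ
  | 0 => 0
  | k+1 => valk α k + (α k).val * Pk D k

lemma valk_lt (α : D.Sigma) (k : ℕ) : D.valk α k < D.Pk k := by
  induction k with
  | zero => exact one_pos
  | succ k ih =>
    show D.valk α k + (α k).val * D.Pk k < D.Pk k * D.p k
    have h1 := (α k).isLt
    calc D.valk α k + (α k).val * D.Pk k < D.Pk k + (α k).val * D.Pk k := by omega
      _ = (1 + (α k).val) * D.Pk k := by ring
      _ ≤ D.p k * D.Pk k := Nat.mul_le_mul_right _ (by omega)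
      _ = D.Pk k * D.p k := Nat.mul_comm _ _

lemma valk_congr {α β : D.Sigma} (k : ℕ) (h : ∀ i, i < k → α i = β i) :
    D.valk α k = D.valk β k := by
  induction k with
  | zero => rfl
  | succ k ih =>
    show D.valk α k + (α k).val * D.Pk k = D.valk β k + (β k).val * D.Pk k
    rw [ih (fun i hi => h i (by omega)), h k (by omega)]

lemma valk_inj {α β : D.Sigma} (k : ℕ) (h : D.valk α k = D.valk β k) :
    ∀ i, i < k → α i = β i := by
  induction k with
  | zero => omega
  | succ k ih =>
    have hh : D.valk α k + (α k).val * D.Pk k = D.valk β k + (β k).val * D.Pk k := h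
    have hva := D.valk_lt α k
    have hvb := D.valk_lt β k
    have hdiv : (α k).val = (β k).val := by
      have h1 : (D.valk α k + (α k).val * D.Pk k) / D.Pk k = (α k).val := by
        rw [Nat.add_mul_div_right _ _ (D.Pk_pos k), Nat.div_eq_of_lt hva, Nat.zero_add]
      have h2 : (D.valk β k + (β k).val * D.Pk k) / D.Pk k = (β k).val := by
        rw [Nat.add_mul_div_right _ _ (D.Pk_pos k), Nat.div_eq_of_lt hvb, Nat.zero_add]
      rw [← h1, ← h2, hh]
    have hval : D.valk α k = D.valk β k := by
      rw [hdiv] at hh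
      omega
    intro i hi
    rcases Nat.lt_or_ge i k with h' | h'
    · exact ih hval i h'
    · have : i = k := by omega
      subst this
      exact Fin.ext hdiv

lemma valk_addOne (α : D.Sigma) (k : ℕ) :
    D.valk (D.addOne α) k + D.carryIn α k * D.Pk k = D.valk α k + 1 := by
  induction k with
  | zero => rfl
  | succ k ih =>
    have hc' := D.carryIn_le_one α k
    have hlt := (α k).isLt
    have hp := D.hp k
    have key : ((α k).val + D.carryIn α k) % D.p k + D.carryIn α (k+1) * D.p k
        = (α k).val + D.carryIn α k := by
      rw [carryIn_succ]
      by_cases h : D.p k ≤ (α k).val + D.carryIn α k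
      · rw [if_pos h]
        have hmod : ((α k).val + D.carryIn α k) % D.p k
            = (α k).val + D.carryIn α k - D.p k := by
          rw [Nat.mod_eq_sub_mod h, Nat.mod_eq_of_lt (by omega)]
        omega
      · rw [if_neg h, Nat.mod_eq_of_lt (by omega)]
        omega
    show D.valk (D.addOne α) k + (D.addOne α k).val * D.Pk k
        + D.carryIn α (k+1) * (D.Pk k * D.p k) = D.valk α k + (α k).val * D.Pk k + 1
    rw [addOne_val]
    calc D.valk (D.addOne α) k + ((α k).val + D.carryIn α k) % D.p k * D.Pk k
          + D.carryIn α (k+1) * (D.Pk k * D.p k)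
        = D.valk (D.addOne α) k
          + (((α k).val + D.carryIn α k) % D.p k + D.carryIn α (k+1) * D.p k) * D.Pk k := by
          ring
      _ = D.valk (D.addOne α) k + ((α k).val + D.carryIn α k) * D.Pk k := by rw [key]
      _ = (D.valk (D.addOne α) k + D.carryIn α k * D.Pk k) + (α k).val * D.Pk k := by ring
      _ = (D.valk α k + 1) + (α k).val * D.Pk k := by rw [ih]
      _ = D.valk α k + (α k).val * D.Pk k + 1 := by ring

lemma valk_addOne_mod (α : D.Sigma) (k : ℕ) :
    D.valk (D.addOne α) k = (D.valk α k + 1) % D.Pk k := by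
  have h := D.valk_addOne α k
  rw [← h, Nat.add_mul_mod_self_right, Nat.mod_eq_of_lt (D.valk_lt _ k)]

lemma valk_iterate (α : D.Sigma) (k r : ℕ) :
    D.valk (D.addOne^[r] α) k = (D.valk α k + r) % D.Pk k := by
  induction r with
  | zero => simp [Nat.mod_eq_of_lt (D.valk_lt α k)]
  | succ r ih =>
    rw [Function.iterate_succ_apply', valk_addOne_mod, ih]
    have : (D.valk α k + r) % D.Pk k + 1 ≡ D.valk α k + r + 1 [MOD D.Pk k] :=
      (Nat.mod_modEq _ _).add_right 1
    exact this

lemma iterate_prefix_transfer {α₀ α : D.Sigma} {k r s : ℕ}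
    (h : ∀ i, i < k → D.addOne^[r] α₀ i = D.addOne^[s] α₀ i) :
    ∀ i, i < k → D.addOne^[r] α i = D.addOne^[s] α i := by
  have hv : (D.valk α₀ k + r) % D.Pk k = (D.valk α₀ k + s) % D.Pk k := by
    rw [← D.valk_iterate α₀ k r, ← D.valk_iterate α₀ k s]
    exact D.valk_congr k h
  have hrs : r ≡ s [MOD D.Pk k] := (Nat.ModEq.add_left_cancel' _ hv)
  apply D.valk_inj k
  rw [D.valk_iterate α k r, D.valk_iterate α k s]
  exact Nat.ModEq.add_left _ hrs

lemma iterate_prefix_inj {α β : D.Sigma} {k r : ℕ}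
    (h : ∀ i, i < k → D.addOne^[r] α i = D.addOne^[r] β i) :
    ∀ i, i < k → α i = β i := by
  have hv : (D.valk α k + r) % D.Pk k = (D.valk β k + r) % D.Pk k := by
    rw [← D.valk_iterate α k r, ← D.valk_iterate β k r]
    exact D.valk_congr k h
  have : D.valk α k = D.valk β k := by
    have h2 : D.valk α k ≡ D.valk β k [MOD D.Pk k] := Nat.ModEq.add_right_cancel' r hv
    rw [Nat.ModEq, Nat.mod_eq_of_lt (D.valk_lt α k), Nat.mod_eq_of_lt (D.valk_lt β k)] at h2
    exact h2
  exact D.valk_inj k this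

lemma Lp_ratio {α β : D.Sigma} {m : ℕ} (h : ∀ n, m ≤ n → β n = α n) (k : ℕ) :
    D.Lp β (m+k) * D.Lp α m = D.Lp α (m+k) * D.Lp β m := by
  induction k with
  | zero => ring
  | succ k ih =>
    have he : m + (k+1) = (m+k) + 1 := rfl
    rw [he, D.Lp_succ β (m+k), D.Lp_succ α (m+k), h (m+k) (Nat.le_add_right m k)]
    linear_combination D.slp (m+k) (α (m+k)) * ih

/-- transfer of convergence from `α` to `addOne α` -/
lemma conv_addOne (hzero : (fun n => D.fin0 n) ∉ D.Eset) (α : D.Sigma) {z y : ℝ}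
    (hz : z ∈ Set.Icc (0:ℝ) 1)
    (hc : Tendsto (fun n => D.lamComp α n z) atTop (𝓝 y)) :
    ∃ y', Tendsto (fun n => D.lamComp (D.addOne α) n z) atTop (𝓝 y') := by
  by_cases htop : ∀ n, α n = D.finTop n
  · have h0 : D.addOne α = fun n => D.fin0 n := funext (D.addOne_top htop)
    rw [h0]
    exact D.conv_of_not_Eset hzero hz
  · obtain ⟨m', hm'⟩ := D.addOne_eventually htop
    set m := m' + 1 with hmm
    have hagree : ∀ n, m ≤ n → D.addOne α n = α n := fun n hn => hm' n (by omega)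
    set β := D.addOne α with hβ
    set c := D.lamComp α m 0 with hc0
    set w : ℕ → ℝ := fun k => D.midComp α m k z with hw
    have h1 : Tendsto (fun k => D.lamComp α (m+k) z) atTop (𝓝 y) := by
      have h := hc.comp (tendsto_add_atTop_nat m)
      simpa [Function.comp_def, Nat.add_comm] using h
    have heq1 : ∀ k, D.lamComp α (m+k) z = D.Lp α m * w k + c := by
      intro k
      rw [D.lamComp_midComp α m k]
      show D.lamComp α m (w k) = _
      rw [D.lamComp_affine]
    have h2 : Tendsto w atTop (𝓝 ((y - c) / D.Lp α m)) := by
      have h3 : Tendsto (fun k => (D.lamComp α (m+k) z - c) / D.Lp α m) atTop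
          (𝓝 ((y - c) / D.Lp α m)) := (h1.sub tendsto_const_nhds).div_const _
      apply h3.congr
      intro k
      rw [heq1 k, add_sub_cancel_right, mul_comm, mul_div_assoc,
        div_self (D.Lp_pos α m).ne', mul_one]
    set wstar := (y - c) / D.Lp α m with hwstar
    have h4 : Tendsto (fun k => D.lamComp β (m+k) z) atTop
        (𝓝 (D.Lp β m * wstar + D.lamComp β m 0)) := by
      have h5 : ∀ k, D.lamComp β (m+k) z = D.Lp β m * w k + D.lamComp β m 0 := by
        intro k
        rw [D.lamComp_midComp β m k]
        show D.lamComp β m (D.midComp β m k z) = _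
        rw [D.midComp_congr m hagree k]
        rw [D.lamComp_affine]
      apply Tendsto.congr (fun k => (h5 k).symm)
      exact (h2.const_mul _).add tendsto_const_nhds
    refine ⟨D.Lp β m * wstar + D.lamComp β m 0, ?_⟩
    rw [← tendsto_add_atTop_iff_nat m]
    simpa [Nat.add_comm] using h4

/-- transfer of difference-to-zero from `α` to `addOne α` -/
lemma diff_transfer (hzero : (fun n => D.fin0 n) ∉ D.Eset) (α : D.Sigma) {z z' : ℝ}
    (hd : Tendsto (fun n => D.lamComp α n z - D.lamComp α n z') atTop (𝓝 0)) :
    Tendsto (fun n => D.lamComp (D.addOne α) n z - D.lamComp (D.addOne α) n z')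
      atTop (𝓝 0) := by
  by_cases hzz : z = z'
  · subst hzz
    simp
  · have hLp0 : Tendsto (fun n => D.Lp (D.addOne α) n) atTop (𝓝 0) := by
      by_cases htop : ∀ n, α n = D.finTop n
      · have h0 : D.addOne α = fun n => D.fin0 n := funext (D.addOne_top htop)
        rw [h0]
        exact D.Lp_tendsto_zero (D.not_Eset hzero)
      · obtain ⟨m', hm'⟩ := D.addOne_eventually htop
        set m := m' + 1 with hmm
        have hagree : ∀ n, m ≤ n → D.addOne α n = α n := fun n hn => hm' n (by omega)
        have hLa : Tendsto (fun n => D.Lp α n) atTop (𝓝 0) := by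
          have h3 : Tendsto (fun n => (D.lamComp α n z - D.lamComp α n z') / (z - z'))
              atTop (𝓝 (0 / (z - z'))) := hd.div_const _
          rw [zero_div] at h3
          apply h3.congr
          intro n
          rw [D.lamComp_sub, mul_div_assoc, div_self (sub_ne_zero.2 hzz), mul_one]
        have heq : ∀ k, D.Lp (D.addOne α) (m+k)
            = D.Lp α (m+k) * (D.Lp (D.addOne α) m / D.Lp α m) := by
          intro k
          have h := D.Lp_ratio hagree k
          have hpos := (D.Lp_pos α m).ne'
          field_simp
          linear_combination h
        rw [← tendsto_add_atTop_iff_nat m]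
        have h6 : Tendsto (fun k => D.Lp α (m+k) * (D.Lp (D.addOne α) m / D.Lp α m))
            atTop (𝓝 (0 * (D.Lp (D.addOne α) m / D.Lp α m))) := by
          apply Tendsto.mul_const
          rw [← tendsto_add_atTop_iff_nat m] at hLa
          simpa [Nat.add_comm] using hLa
        rw [zero_mul] at h6
        have h8 := Tendsto.congr (fun k => (heq k).symm) h6
        simpa [Nat.add_comm] using h8
    have h7 : Tendsto (fun n => D.Lp (D.addOne α) n * (z - z')) atTop (𝓝 (0 * (z - z'))) :=
      hLp0.mul_const _
    rw [zero_mul] at h7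
    apply h7.congr
    intro n
    rw [D.lamComp_sub]

end FAData



/-- every set of reals has a countable coinitial subset -/
lemma exists_coinitial (T : Set ℝ) :
    ∃ C, C ⊆ T ∧ C.Countable ∧ ∀ t ∈ T, ∃ c ∈ C, c ≤ t := by
  classical
  refine ⟨(⋃ q : ℚ, Set.range (fun h : (T ∩ Set.Iio (q:ℝ)).Nonempty => h.choose))
    ∪ {t ∈ T | ∀ t' ∈ T, t ≤ t'}, ?_, ?_, ?_⟩
  · rintro x (hx | hx)
    · obtain ⟨q, hq⟩ := Set.mem_iUnion.1 hx
      obtain ⟨h, rfl⟩ := hq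
      exact h.choose_spec.1
    · exact hx.1
  · apply Set.Countable.union
    · apply Set.countable_iUnion
      intro q
      apply Set.Subsingleton.countable
      rintro a ⟨h1, rfl⟩ b ⟨h2, rfl⟩
      rfl
    · apply Set.Subsingleton.countable
      intro a ha b hb
      exact le_antisymm (ha.2 b hb.1) (hb.2 a ha.1)
  · intro t ht
    by_cases hmin : ∀ t' ∈ T, t ≤ t'
    · exact ⟨t, Or.inr ⟨ht, hmin⟩, le_refl t⟩
    · push_neg at hmin
      obtain ⟨t', ht', hlt⟩ := hmin
      obtain ⟨q, hq1, hq2⟩ := exists_rat_btwn hlt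
      have hne : (T ∩ Set.Iio (q:ℝ)).Nonempty := ⟨t', ht', hq1⟩
      refine ⟨hne.choose, Or.inl (Set.mem_iUnion.2 ⟨q, ⟨hne, rfl⟩⟩), ?_⟩
      exact le_of_lt (lt_trans hne.choose_spec.2 hq2)

/-- countable "density witnesses" for the values of `m` on `Sset` -/
lemma exists_dense_picks (Sset : Set ℝ) (m : ℝ → ℝ) :
    ∃ Dn, Dn ⊆ Sset ∧ Dn.Countable ∧ ∀ v ε : ℝ, 0 < ε →
      (∃ s ∈ Sset, m s ∈ Set.Ioo (v-ε) v) → ∃ d ∈ Dn, m d ∈ Set.Ioo (v-ε) v := by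
  classical
  refine ⟨⋃ q : ℚ × ℚ, Set.range
      (fun h : ({s | s ∈ Sset ∧ m s ∈ Set.Ioo (q.1:ℝ) (q.2:ℝ)}).Nonempty => h.choose),
    ?_, ?_, ?_⟩
  · intro x hx
    obtain ⟨q, hq⟩ := Set.mem_iUnion.1 hx
    obtain ⟨h, rfl⟩ := hq
    exact h.choose_spec.1
  · apply Set.countable_iUnion
    intro q
    apply Set.Subsingleton.countable
    rintro a ⟨h1, rfl⟩ b ⟨h2, rfl⟩
    rfl
  · rintro v ε hε ⟨s, hs, hs1, hs2⟩
    obtain ⟨q1, hq11, hq12⟩ := exists_rat_btwn hs1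
    obtain ⟨q2, hq21, hq22⟩ := exists_rat_btwn hs2
    have hne : ({s' | s' ∈ Sset ∧ m s' ∈ Set.Ioo ((q1,q2).1:ℝ) ((q1,q2).2:ℝ)}).Nonempty :=
      ⟨s, hs, hq12, hq21⟩
    refine ⟨hne.choose, Set.mem_iUnion.2 ⟨(q1, q2), ⟨hne, rfl⟩⟩, ?_, ?_⟩
    · exact lt_trans hq11 hne.choose_spec.2.1
    · exact lt_trans hne.choose_spec.2.2 hq22

/-- the set of values of `A` isolated from below is countable -/
lemma countable_isolated (A : Set ℝ) :
    {v | v ∈ A ∧ ∃ ε, 0 < ε ∧ ∀ w ∈ A, w ∉ Set.Ioo (v-ε) v}.Countable := by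
  classical
  set V := {v | v ∈ A ∧ ∃ ε, 0 < ε ∧ ∀ w ∈ A, w ∉ Set.Ioo (v-ε) v} with hV
  have key : ∀ v : V, ∃ q : ℚ, (q:ℝ) < v ∧ ∀ w ∈ A, w < (v:ℝ) → w < q := by
    rintro ⟨v, hvA, ε, hε, hiso⟩
    obtain ⟨q, hq1, hq2⟩ := exists_rat_btwn (show v - ε < v by linarith)
    refine ⟨q, hq2, fun w hw hwv => ?_⟩
    have := hiso w hw
    rw [Set.mem_Ioo] at this
    push_neg at this
    have hle : w ≤ v - ε := by
      by_contra hcon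
      push_neg at hcon
      exact absurd (this hcon) (not_le.2 hwv)
    linarith
  choose q hq1 hq2 using key
  have hinj : Function.Injective q := by
    intro v v' h
    by_contra hne
    have hne' : (v:ℝ) ≠ (v':ℝ) := fun hc => hne (Subtype.ext hc)
    rcases lt_or_gt_of_ne hne' with hlt | hlt
    · have h1 : (v:ℝ) < q v' := hq2 v' v v.2.1 hlt
      have h2 : (q v : ℝ) < v := hq1 v
      rw [h] at h2
      exact absurd (lt_trans h2 h1) (lt_irrefl _)
    · have h1 : (v':ℝ) < q v := hq2 v v' v'.2.1 hlt
      have h2 : (q v' : ℝ) < v' := hq1 v'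
      rw [← h] at h2
      exact absurd (lt_trans h2 h1) (lt_irrefl _)
  rw [← Set.countable_coe_iff]
  exact Function.Injective.countable hinj

/-- A monotone function on a set of reals is determined by countably many
graph points via suprema. -/
lemma exists_monotone_code (Sset : Set ℝ) (m : ℝ → ℝ) (hm : MonotoneOn m Sset) :
    ∃ P : ℕ → Option (ℝ × ℝ),
      (∀ j a b, P j = some (a,b) → a ∈ Sset ∧ m a = b) ∧
      ∀ y ∈ Sset, IsLUB {b | ∃ j a, P j = some (a,b) ∧ a ≤ y} (m y) := by
  classical
  set A := m '' Sset with hA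
  set V := {v | v ∈ A ∧ ∃ ε, 0 < ε ∧ ∀ w ∈ A, w ∉ Set.Ioo (v-ε) v} with hV
  have hVc : V.Countable := countable_isolated A
  set Cv : ℝ → Set ℝ := fun v => (exists_coinitial {s ∈ Sset | m s = v}).choose with hCv
  have hCvspec : ∀ v, Cv v ⊆ {s ∈ Sset | m s = v} ∧ (Cv v).Countable ∧
      ∀ t ∈ {s ∈ Sset | m s = v}, ∃ c ∈ Cv v, c ≤ t :=
    fun v => (exists_coinitial {s ∈ Sset | m s = v}).choose_spec
  obtain ⟨Dn, hDsub, hDc, hDspec⟩ := exists_dense_picks Sset m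
  set G := (⋃ v ∈ V, Cv v) ∪ Dn with hG
  have hGsub : G ⊆ Sset := by
    rintro x (hx | hx)
    · obtain ⟨v, _, hxv⟩ := Set.mem_iUnion₂.1 hx
      exact ((hCvspec v).1 hxv).1
    · exact hDsub hx
  have hGc : G.Countable :=
    (Set.Countable.biUnion hVc fun v _ => (hCvspec v).2.1).union hDc
  have hcover : ∀ y ∈ Sset, ∀ b : ℝ, b < m y → ∃ c ∈ G, c ≤ y ∧ b < m c := by
    intro y hy b hb
    by_cases hyV : m y ∈ V
    · obtain ⟨c, hcC, hcy⟩ := (hCvspec (m y)).2.2 y ⟨hy, rfl⟩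
      have hcmem := (hCvspec (m y)).1 hcC
      refine ⟨c, Or.inl (Set.mem_iUnion₂.2 ⟨m y, hyV, hcC⟩), hcy, ?_⟩
      rw [hcmem.2]
      exact hb
    · have hmyA : m y ∈ A := ⟨y, hy, rfl⟩
      have hne : ∃ w ∈ A, w ∈ Set.Ioo (m y - (m y - b)) (m y) := by
        by_contra hcon
        push_neg at hcon
        exact hyV ⟨hmyA, m y - b, by linarith, fun w hw => by
          intro hmem
          exact (hcon w hw hmem)⟩
      obtain ⟨w, ⟨s, hsS, hsw⟩, hw1, hw2⟩ := hne
      obtain ⟨d, hdD, hd1, hd2⟩ := hDspec (m y) (m y - b) (by linarith)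
        ⟨s, hsS, by rw [hsw]; exact ⟨hw1, hw2⟩⟩
      have hdy : d ≤ y := by
        by_contra hcon
        push_neg at hcon
        exact absurd (hm hy (hDsub hdD) hcon.le) (not_le.2 hd2)
      exact ⟨d, Or.inr hdD, hdy, by linarith⟩
  by_cases hGne : G.Nonempty
  · obtain ⟨g, hg⟩ := hGc.exists_eq_range hGne
    refine ⟨fun j => some (g j, m (g j)), ?_, ?_⟩
    · intro j a b hab
      rw [Option.some.injEq, Prod.mk.injEq] at hab
      obtain ⟨h1, h2⟩ := hab
      subst h1
      subst h2
      have : g j ∈ G := by rw [hg]; exact ⟨j, rfl⟩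
      exact ⟨hGsub this, rfl⟩
    · intro y hy
      constructor
      · rintro b ⟨j, a, hab, hay⟩
        rw [Option.some.injEq, Prod.mk.injEq] at hab
        obtain ⟨h1, h2⟩ := hab
        subst h1
        subst h2
        have haG : g j ∈ G := by rw [hg]; exact ⟨j, rfl⟩
        exact hm (hGsub haG) hy hay
      · intro b hb
        by_contra hcon
        push_neg at hcon
        obtain ⟨c, hcG, hcy, hbc⟩ := hcover y hy b hcon
        have hex : ∃ j, g j = c := by
          rw [hg] at hcG
          exact hcG
        obtain ⟨j, hj⟩ := hex
        have hmem : m c ∈ {b | ∃ j a, (fun j => some (g j, m (g j))) j = some (a,b) ∧ a ≤ y} :=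
          ⟨j, c, by simp [hj], hcy⟩
        exact absurd (hb hmem) (not_le.2 hbc)
  · refine ⟨fun _ => none, ?_, ?_⟩
    · intro j a b hab
      exact absurd hab (by simp)
    · intro y hy
      obtain ⟨c, hcG, _, _⟩ := hcover y hy (m y - 1) (by linarith)
      exact absurd ⟨c, hcG⟩ hGne


namespace FASystem

variable (S : FASystem)

lemma zeros_not_Eset : (fun n => S.toFAData.fin0 n) ∉ S.toFAData.Eset := by
  rintro ⟨m, hm⟩
  obtain ⟨n, hns, hn⟩ := S.infLeft.exists_gt m
  have hq : S.toFAData.lam n (S.toFAData.fin0 n) = lam1 := hm n (le_of_lt hn)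
  rcases hns with h | h
  · exact FAData.lam0_ne_lam1 (h ▸ hq ▸ rfl)
  · exact FAData.lam2_ne_lam1 (h ▸ hq ▸ rfl)

lemma iterate_spec (x : S.toFAData.X) {z : ℝ} (hz : z ∈ Set.Icc (0:ℝ) 1)
    (hc : Tendsto (fun n => S.toFAData.lamComp x.1.1 n z) atTop (𝓝 x.1.2)) (n : ℕ) :
    ∃ y, Tendsto (fun k => S.toFAData.lamComp (S.toFAData.addOne^[n] x.1.1) k z)
        atTop (𝓝 y) ∧
      (S.T^[n] x : S.toFAData.Sigma × ℝ) = (S.toFAData.addOne^[n] x.1.1, y) := by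
  induction n with
  | zero =>
    refine ⟨x.1.2, ?_, ?_⟩
    · simpa using hc
    · simp
  | succ n ih =>
    obtain ⟨y, hy, heq⟩ := ih
    obtain ⟨y', hy'⟩ := S.toFAData.conv_addOne S.zeros_not_Eset _ hz hy
    have hmem : (S.toFAData.addOne^[n] x.1.1, y) ∈ S.toFAData.X := ⟨z, hz, hy⟩
    have hTn : S.T^[n] x = ⟨(S.toFAData.addOne^[n] x.1.1, y), hmem⟩ := Subtype.ext heq
    refine ⟨y', ?_, ?_⟩
    · rw [Function.iterate_succ_apply']
      exact hy'
    · rw [Function.iterate_succ_apply', hTn, Function.iterate_succ_apply']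
      exact S.hT _ z y y' hz hy hy' hmem

lemma ellis_approx {f : S.toFAData.X → S.toFAData.X} (hf : f ∈ S.Ellis)
    (x₁ x₂ : S.toFAData.X) {U₁ U₂ : Set (S.toFAData.Sigma × ℝ)}
    (h₁ : U₁ ∈ 𝓝 (f x₁ : S.toFAData.Sigma × ℝ)) (h₂ : U₂ ∈ 𝓝 (f x₂ : S.toFAData.Sigma × ℝ)) :
    ∃ n, ((S.T^[n+1] x₁ : S.toFAData.X) : S.toFAData.Sigma × ℝ) ∈ U₁ ∧
      ((S.T^[n+1] x₂ : S.toFAData.X) : S.toFAData.Sigma × ℝ) ∈ U₂ := by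
  have hcont : ∀ x : S.toFAData.X,
      Continuous fun g : S.toFAData.X → S.toFAData.X => ((g x : S.toFAData.X) :
        S.toFAData.Sigma × ℝ) :=
    fun x => continuous_subtype_val.comp (continuous_apply x)
  have hW : {g : S.toFAData.X → S.toFAData.X |
      ((g x₁ : S.toFAData.X) : S.toFAData.Sigma × ℝ) ∈ U₁ ∧
      ((g x₂ : S.toFAData.X) : S.toFAData.Sigma × ℝ) ∈ U₂} ∈ 𝓝 f :=
    inter_mem ((hcont x₁).continuousAt.preimage_mem_nhds h₁)
      ((hcont x₂).continuousAt.preimage_mem_nhds h₂)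
  obtain ⟨g, hgW, hgR⟩ := mem_closure_iff_nhds.1 hf _ hW
  obtain ⟨n, rfl⟩ := hgR
  exact ⟨n, hgW.1, hgW.2⟩

lemma cyl_mem_nhds (q : S.toFAData.Sigma × ℝ) (k : ℕ) :
    {r : S.toFAData.Sigma × ℝ | ∀ i, i < k → r.1 i = q.1 i} ∈ 𝓝 q := by
  have hopen : IsOpen {r : S.toFAData.Sigma × ℝ | ∀ i, i < k → r.1 i = q.1 i} := by
    have heq : {r : S.toFAData.Sigma × ℝ | ∀ i, i < k → r.1 i = q.1 i}
        = ⋂ i ∈ Finset.range k, ((fun r : S.toFAData.Sigma × ℝ => r.1 i) ⁻¹' {q.1 i}) := by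
      ext r
      simp [Finset.mem_range]
    rw [heq]
    apply isOpen_biInter_finset
    intro i _
    exact (isOpen_discrete {q.1 i}).preimage ((continuous_apply i).comp continuous_fst)
  exact hopen.mem_nhds (fun i _ => rfl)

lemma ball_mem_nhds' (q : S.toFAData.Sigma × ℝ) {ε : ℝ} (hε : 0 < ε) :
    (Prod.snd ⁻¹' Metric.ball q.2 ε : Set (S.toFAData.Sigma × ℝ)) ∈ 𝓝 q :=
  (Metric.isOpen_ball.preimage continuous_snd).mem_nhds (by
    simp [Metric.mem_ball, hε])

/-- a chosen point of `X` over each `α` -/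
def pt (α : S.toFAData.Sigma) : S.toFAData.X :=
  ⟨(α, (S.toFAData.fiber_nonempty α).choose), (S.toFAData.fiber_nonempty α).choose_spec⟩

lemma pt_fst (α : S.toFAData.Sigma) : (S.pt α).1.1 = α := rfl

lemma fst_approx {f : S.toFAData.X → S.toFAData.X} (hf : f ∈ S.Ellis)
    (x x' : S.toFAData.X) (k : ℕ) :
    ∃ n, (∀ i, i < k → S.toFAData.addOne^[n+1] x.1.1 i = (f x).1.1 i) ∧
      (∀ i, i < k → S.toFAData.addOne^[n+1] x'.1.1 i = (f x').1.1 i) := by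
  obtain ⟨z, hz, hc⟩ := x.2
  obtain ⟨z', hz', hc'⟩ := x'.2
  obtain ⟨n, h1, h2⟩ := S.ellis_approx hf x x' (S.cyl_mem_nhds _ k) (S.cyl_mem_nhds _ k)
  obtain ⟨y, _, heq⟩ := S.iterate_spec x hz hc (n+1)
  obtain ⟨y', _, heq'⟩ := S.iterate_spec x' hz' hc' (n+1)
  refine ⟨n, fun i hi => ?_, fun i hi => ?_⟩
  · have := h1 i hi
    rw [heq] at this
    exact this
  · have := h2 i hi
    rw [heq'] at this
    exact this

lemma fst_eq_of_eq_at {f h : S.toFAData.X → S.toFAData.X} (hf : f ∈ S.Ellis)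
    (hh : h ∈ S.Ellis) (x₀ : S.toFAData.X) (hx₀ : (f x₀).1.1 = (h x₀).1.1)
    (x : S.toFAData.X) : (f x).1.1 = (h x).1.1 := by
  funext i
  obtain ⟨n, hn₀, hn⟩ := S.fst_approx hf x₀ x (i+1)
  obtain ⟨m, hm₀, hm⟩ := S.fst_approx hh x₀ x (i+1)
  have htrans : ∀ j, j < i+1 → S.toFAData.addOne^[n+1] x₀.1.1 j
      = S.toFAData.addOne^[m+1] x₀.1.1 j := by
    intro j hj
    rw [hn₀ j hj, hm₀ j hj, hx₀]
  have h2 := S.toFAData.iterate_prefix_transfer (α := x.1.1) htrans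
  have h3 := h2 i (by omega)
  rw [hn i (by omega), hm i (by omega)] at h3
  exact h3

lemma fst_const_on_fiber {f : S.toFAData.X → S.toFAData.X} (hf : f ∈ S.Ellis)
    (x x' : S.toFAData.X) (hxx : x.1.1 = x'.1.1) : (f x).1.1 = (f x').1.1 := by
  funext i
  obtain ⟨n, h1, h2⟩ := S.fst_approx hf x x' (i+1)
  have ha := h1 i (by omega)
  have hb := h2 i (by omega)
  rw [← ha, ← hb, hxx]

lemma fst_injective {f : S.toFAData.X → S.toFAData.X} (hf : f ∈ S.Ellis)
    (x x' : S.toFAData.X) (h : (f x).1.1 = (f x').1.1) : x.1.1 = x'.1.1 := by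
  funext i
  obtain ⟨n, h1, h2⟩ := S.fst_approx hf x x' (i+1)
  have htrans : ∀ j, j < i+1 → S.toFAData.addOne^[n+1] x.1.1 j
      = S.toFAData.addOne^[n+1] x'.1.1 j := by
    intro j hj
    rw [h1 j hj, h2 j hj, h]
  exact S.toFAData.iterate_prefix_inj htrans i (by omega)

lemma snd_mono_iterate (x x' : S.toFAData.X) (hxx : x.1.1 = x'.1.1)
    (hy : x.1.2 ≤ x'.1.2) (n : ℕ) :
    (S.T^[n] x : S.toFAData.Sigma × ℝ).2 ≤ (S.T^[n] x' : S.toFAData.Sigma × ℝ).2 := by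
  obtain ⟨z, hz, hc⟩ := x.2
  obtain ⟨z', hz', hc'⟩ := x'.2
  obtain ⟨y, hcy, heq⟩ := S.iterate_spec x hz hc n
  obtain ⟨y', hcy', heq'⟩ := S.iterate_spec x' hz' hc' n
  rw [heq, heq']
  show y ≤ y'
  rw [← hxx] at hc' hcy'
  rcases le_or_gt z z' with hzz | hzz
  · refine le_of_tendsto_of_tendsto' hcy hcy' (fun k => ?_)
    have := S.toFAData.lamComp_sub (S.toFAData.addOne^[n] x.1.1) k z' z
    nlinarith [S.toFAData.Lp_pos (S.toFAData.addOne^[n] x.1.1) k]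
  · -- z' < z forces x.1.2 = x'.1.2 and then y = y'
    have hle : x'.1.2 ≤ x.1.2 := by
      refine le_of_tendsto_of_tendsto' hc' hc (fun k => ?_)
      have := S.toFAData.lamComp_sub x.1.1 k z z'
      nlinarith [S.toFAData.Lp_pos x.1.1 k]
    have heqy : x.1.2 = x'.1.2 := le_antisymm hy hle
    have hdiff : ∀ r : ℕ, Tendsto (fun k => S.toFAData.lamComp (S.toFAData.addOne^[r] x.1.1) k z
        - S.toFAData.lamComp (S.toFAData.addOne^[r] x.1.1) k z') atTop (𝓝 0) := by
      intro r
      induction r with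
      | zero =>
        have h0 := hc.sub hc'
        rw [← heqy, sub_self] at h0
        simpa using h0
      | succ r ih =>
        have := S.toFAData.diff_transfer S.zeros_not_Eset (S.toFAData.addOne^[r] x.1.1) ih
        simpa [Function.iterate_succ_apply'] using this
    have h5 := tendsto_nhds_unique (hcy.sub hcy') (hdiff n)
    have : y = y' := by linarith [sub_eq_zero.1 h5]
    exact this.le

lemma snd_mono {f : S.toFAData.X → S.toFAData.X} (hf : f ∈ S.Ellis)
    (x x' : S.toFAData.X) (hxx : x.1.1 = x'.1.1) (hy : x.1.2 ≤ x'.1.2) :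
    (f x).1.2 ≤ (f x').1.2 := by
  refine le_of_forall_pos_le_add (fun ε hε => ?_)
  obtain ⟨n, h1, h2⟩ := S.ellis_approx hf x x'
    (S.ball_mem_nhds' (f x : S.toFAData.Sigma × ℝ) (half_pos hε))
    (S.ball_mem_nhds' (f x' : S.toFAData.Sigma × ℝ) (half_pos hε))
  have hmono := S.snd_mono_iterate x x' hxx hy (n+1)
  simp only [Set.mem_preimage, Metric.mem_ball, Real.dist_eq] at h1 h2
  have hb1 : |(S.T^[n+1] x : S.toFAData.Sigma × ℝ).2 - (f x).1.2| < ε/2 := h1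
  have hb2 : |(S.T^[n+1] x' : S.toFAData.Sigma × ℝ).2 - (f x').1.2| < ε/2 := h2
  rw [abs_lt] at hb1 hb2
  linarith [hb1.1, hb1.2, hb2.1, hb2.2, hmono]

def Fib (α : S.toFAData.Sigma) : Set ℝ := {y | (α, y) ∈ S.toFAData.X}

open Classical in
def mfib (f : S.toFAData.X → S.toFAData.X) (α : S.toFAData.Sigma) : ℝ → ℝ :=
  fun y => if h : (α, y) ∈ S.toFAData.X then (f ⟨(α,y),h⟩).1.2 else 0

lemma mfib_mono {f : S.toFAData.X → S.toFAData.X} (hf : f ∈ S.Ellis)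
    (α : S.toFAData.Sigma) : MonotoneOn (S.mfib f α) (S.Fib α) := by
  intro y hy y' hy' hle
  have hy2 : (α, y) ∈ S.toFAData.X := hy
  have hy2' : (α, y') ∈ S.toFAData.X := hy'
  unfold mfib
  rw [dif_pos hy2, dif_pos hy2']
  exact S.snd_mono hf ⟨(α,y),hy⟩ ⟨(α,y'),hy'⟩ rfl hle

lemma mfib_eq (f : S.toFAData.X → S.toFAData.X) (x : S.toFAData.X) :
    S.mfib f x.1.1 x.1.2 = (f x).1.2 := by
  have hx : (x.1.1, x.1.2) ∈ S.toFAData.X := by rw [Prod.mk.eta]; exact x.2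
  unfold mfib
  rw [dif_pos hx]

end FASystem

/-- A minimal Floyd–Auslander system with finite
`Λ = {n : |Q(n)| ≥ 2}` is tame: `|E(X)| ≤ 2^ℵ₀`. -/
theorem floyd_auslander_tame_of_finite_Lambda (S : FASystem) (hmin : S.Minimal)
    (hLambda : {n : ℕ | 2 ≤ (S.toFAData.Q n).ncard}.Finite) :
    Cardinal.mk ↥S.Ellis ≤ Cardinal.continuum := by
  classical
  obtain ⟨N, hN⟩ : ∃ N, ∀ n, N ≤ n → ¬ 2 ≤ (S.toFAData.Q n).ncard := by
    obtain ⟨N, hNmem⟩ := hLambda.bddAbove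
    exact ⟨N+1, fun n hn hcon => by have := hNmem hcon; omega⟩
  have hEc : S.toFAData.Eset.Countable := S.toFAData.Eset_countable N hN
  set x₀ : S.toFAData.X := S.pt (fun n => S.toFAData.fin0 n) with hx₀
  have hex : ∀ f : ↥S.Ellis,
      ∃ d : S.toFAData.Sigma × (ℕ → S.toFAData.Sigma) × (ℕ → ℕ → Option (ℝ × ℝ)),
        d.1 = (f.1 x₀).1.1 ∧
        (∀ x : S.toFAData.X, (f.1 x).1.1 ∈ S.toFAData.Eset → ∃ j, d.2.1 j = x.1.1) ∧
        (∀ j, (∀ i a b, d.2.2 j i = some (a,b) →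
            a ∈ S.Fib (d.2.1 j) ∧ S.mfib f.1 (d.2.1 j) a = b) ∧
          ∀ y ∈ S.Fib (d.2.1 j),
            IsLUB {b | ∃ i a, d.2.2 j i = some (a,b) ∧ a ≤ y} (S.mfib f.1 (d.2.1 j) y)) := by
    intro f
    have hbadc : {α : S.toFAData.Sigma | (f.1 (S.pt α)).1.1 ∈ S.toFAData.Eset}.Countable := by
      have hinj : Function.Injective (fun α => (f.1 (S.pt α)).1.1) := by
        intro α α' h
        exact S.fst_injective f.2 (S.pt α) (S.pt α') h
      exact Set.Countable.preimage hEc hinj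
    have hs : ∃ s : ℕ → S.toFAData.Sigma,
        ∀ x : S.toFAData.X, (f.1 x).1.1 ∈ S.toFAData.Eset → ∃ j, s j = x.1.1 := by
      by_cases hbad : {α : S.toFAData.Sigma | (f.1 (S.pt α)).1.1 ∈ S.toFAData.Eset}.Nonempty
      · obtain ⟨s, hsr⟩ := hbadc.exists_eq_range hbad
        refine ⟨s, fun x hx => ?_⟩
        have hmem : x.1.1 ∈ {α : S.toFAData.Sigma |
            (f.1 (S.pt α)).1.1 ∈ S.toFAData.Eset} := by
          show (f.1 (S.pt x.1.1)).1.1 ∈ S.toFAData.Eset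
          rw [S.fst_const_on_fiber f.2 (S.pt x.1.1) x rfl]
          exact hx
        rw [hsr] at hmem
        obtain ⟨j, hj⟩ := hmem
        exact ⟨j, hj⟩
      · refine ⟨fun _ => (fun n => S.toFAData.fin0 n), fun x hx => ?_⟩
        exfalso
        apply hbad
        refine ⟨x.1.1, ?_⟩
        show (f.1 (S.pt x.1.1)).1.1 ∈ S.toFAData.Eset
        rw [S.fst_const_on_fiber f.2 (S.pt x.1.1) x rfl]
        exact hx
    obtain ⟨s, hscov⟩ := hs
    have hcode : ∀ j, ∃ P : ℕ → Option (ℝ × ℝ),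
        (∀ i a b, P i = some (a,b) → a ∈ S.Fib (s j) ∧ S.mfib f.1 (s j) a = b) ∧
        ∀ y ∈ S.Fib (s j), IsLUB {b | ∃ i a, P i = some (a,b) ∧ a ≤ y}
          (S.mfib f.1 (s j) y) := by
      intro j
      exact exists_monotone_code (S.Fib (s j)) (S.mfib f.1 (s j)) (S.mfib_mono f.2 (s j))
    choose P hP using hcode
    exact ⟨((f.1 x₀).1.1, s, P), rfl, hscov, hP⟩
  have hΦinj : Function.Injective
      (fun f : ↥S.Ellis => (hex f).choose) := by
    intro f h heq
    have heq' : (hex f).choose = (hex h).choose := heq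
    have hf := (hex f).choose_spec
    have hh := (hex h).choose_spec
    rw [← heq'] at hh
    have hfst : ∀ x : S.toFAData.X, (f.1 x).1.1 = (h.1 x).1.1 := by
      apply S.fst_eq_of_eq_at f.2 h.2 x₀
      rw [← hf.1, ← hh.1]
    apply Subtype.ext
    funext x
    apply Subtype.ext
    by_cases hE : (f.1 x).1.1 ∈ S.toFAData.Eset
    · obtain ⟨j, hj⟩ := hf.2.1 x hE
      have hyFib : x.1.2 ∈ S.Fib x.1.1 := by
        show (x.1.1, x.1.2) ∈ S.toFAData.X
        rw [Prod.mk.eta]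
        exact x.2
      have hyFib' : x.1.2 ∈ S.Fib ((hex f).choose.2.1 j) := by rw [hj]; exact hyFib
      have hLf := (hf.2.2 j).2 x.1.2 hyFib'
      have hLh := (hh.2.2 j).2 x.1.2 hyFib'
      have hval := hLf.unique hLh
      rw [hj] at hval
      rw [S.mfib_eq f.1 x, S.mfib_eq h.1 x] at hval
      exact Prod.ext (hfst x) hval
    · have hfmem : ((f.1 x).1.1, (f.1 x).1.2) ∈ S.toFAData.X := by
        rw [Prod.mk.eta]; exact (f.1 x).2
      have hhmem : ((f.1 x).1.1, (h.1 x).1.2) ∈ S.toFAData.X := by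
        rw [hfst x, Prod.mk.eta]; exact (h.1 x).2
      exact Prod.ext (hfst x) (S.toFAData.fiber_unique hE hfmem hhmem)
  have hSig : Cardinal.mk S.toFAData.Sigma ≤ Cardinal.continuum := by
    have hinj : Function.Injective (fun (α : S.toFAData.Sigma) (n : ℕ) => (α n).val) := by
      intro α β h
      funext n
      exact Fin.ext (congrFun h n)
    calc Cardinal.mk S.toFAData.Sigma ≤ Cardinal.mk (ℕ → ℕ) :=
          Cardinal.mk_le_of_injective hinj
      _ = Cardinal.continuum := by
          rw [← Cardinal.power_def, Cardinal.mk_nat, Cardinal.aleph0_power_aleph0]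
  have harrow : ∀ (A : Type) (_ : Cardinal.mk A ≤ Cardinal.continuum),
      Cardinal.mk (ℕ → A) ≤ Cardinal.continuum := by
    intro A hA
    calc Cardinal.mk (ℕ → A) = Cardinal.mk A ^ Cardinal.mk ℕ := (Cardinal.power_def A ℕ).symm
      _ = Cardinal.mk A ^ Cardinal.aleph0 := by rw [Cardinal.mk_nat]
      _ ≤ Cardinal.continuum ^ Cardinal.aleph0 := Cardinal.power_le_power_right hA
      _ = Cardinal.continuum := Cardinal.continuum_power_aleph0
  have hOpt : Cardinal.mk (Option (ℝ × ℝ)) ≤ Cardinal.continuum := by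
    rw [Cardinal.mk_option]
    have h1 : Cardinal.mk (ℝ × ℝ) = Cardinal.continuum := by
      rw [Cardinal.mk_prod, Cardinal.mk_real]
      simp [Cardinal.mul_eq_self Cardinal.aleph0_le_continuum]
    rw [h1, Cardinal.add_one_eq Cardinal.aleph0_le_continuum]
  have htotal : Cardinal.mk (S.toFAData.Sigma × (ℕ → S.toFAData.Sigma)
      × (ℕ → ℕ → Option (ℝ × ℝ))) ≤ Cardinal.continuum := by
    rw [Cardinal.mk_prod, Cardinal.mk_prod]
    simp only [Cardinal.lift_id]
    have h2 := harrow S.toFAData.Sigma hSig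
    have h3 := harrow (ℕ → Option (ℝ × ℝ)) (harrow (Option (ℝ × ℝ)) hOpt)
    calc Cardinal.mk S.toFAData.Sigma * (Cardinal.mk (ℕ → S.toFAData.Sigma)
          * Cardinal.mk (ℕ → ℕ → Option (ℝ × ℝ)))
        ≤ Cardinal.continuum * (Cardinal.continuum * Cardinal.continuum) := by
          exact mul_le_mul' hSig (mul_le_mul' h2 h3)
      _ = Cardinal.continuum := by
          rw [Cardinal.mul_eq_self Cardinal.aleph0_le_continuum,
            Cardinal.mul_eq_self Cardinal.aleph0_le_continuum]
  exact le_trans (Cardinal.mk_le_of_injective hΦinj) htotal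
end
end
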